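/- arXiv:1201.5258 — 3 statements merged into one kernel-verified Lean document; each statement's English description precedes it below -/
import Mathlib

section
/- Majorana–Wigner formula for the reduced rotation matrix: for every n : ℕ, every θ ∈ ℝ and all indices j, k ∈ {0, …, n}, the (j,k) entry of exp(−iθS₂) equals Σ_t (−1)^t · [ √( j! (n−j)! k! (n−k)! ) / ( (j−t)! (n−k−t)! t! (t−j+k)! ) ] · (cos(θ/2))^{n+j−k−2t} · (sin(θ/2))^{2t−j+k}, where the sum runs over all integers t with t ≥ 0, j − t ≥ 0, n − k − t ≥ 0 and t − j + k ≥ 0. -/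
open Matrix Complex Nat

/-- Spin operator `S₃` for `2s = n`: diagonal with entries `j - n/2`. -/
noncomputable def S3 (n : ℕ) : Matrix (Fin (n+1)) (Fin (n+1)) ℂ :=
  Matrix.diagonal fun j => (j : ℂ) - (n : ℂ) / 2

/-- Raising operator `S₊`: `(S₊)_{k+1,k} = √((k+1)(n-k))`. -/
noncomputable def Sp (n : ℕ) : Matrix (Fin (n+1)) (Fin (n+1)) ℂ :=
  Matrix.of fun j k =>
    if (j : ℕ) = (k : ℕ) + 1 then (Real.sqrt (((k : ℕ) + 1) * (n - (k : ℕ))) : ℂ) else 0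

/-- Lowering operator `S₋ = S₊ᴴ`. -/
noncomputable def Sm (n : ℕ) : Matrix (Fin (n+1)) (Fin (n+1)) ℂ := (Sp n)ᴴ

/-- `S₂ = (S₊ - S₋)/(2i)`. -/
noncomputable def S2 (n : ℕ) : Matrix (Fin (n+1)) (Fin (n+1)) ℂ :=
  (2 * Complex.I)⁻¹ • (Sp n - Sm n)

namespace MW

noncomputable def Sq (n j k : ℕ) : ℝ :=
  Real.sqrt ((j ! * (n - j)! * k ! * (n - k)! : ℕ))

def den (n j k t : ℕ) : ℕ := (j - t)! * (n - k - t)! * t ! * (t + k - j)!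

noncomputable def w (n j k t : ℕ) : ℝ :=
  Real.sqrt ((j ! * (n - j)! * k ! * (n - k)! : ℕ)) /
    (((j - t)! * (n - k - t)! * t ! * (t + k - j)! : ℕ))

lemma w_def (n j k t : ℕ) : w n j k t = Sq n j k / (den n j k t : ℝ) := rfl

lemma den_pos (n j k t : ℕ) : 0 < den n j k t := by
  unfold den; positivity

lemma den_ne (n j k t : ℕ) : ((den n j k t : ℕ) : ℝ) ≠ 0 := by
  exact_mod_cast (den_pos n j k t).ne'

lemma Sq_nonneg (n j k : ℕ) : 0 ≤ Sq n j k := Real.sqrt_nonneg _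

lemma div_trick {a b m D : ℝ} (hm : m ≠ 0) (h : b * m = D) : a / b = (a * m) / D := by
  rw [← h, mul_div_mul_right _ _ hm]

lemma sqrtA {n j k : ℕ} (hj1 : 1 ≤ j) (hjn : j ≤ n) :
    Real.sqrt (j * ((n : ℝ) - j + 1)) * Sq n (j - 1) k = ((n : ℝ) - j + 1) * Sq n j k := by
  have hjr : (j : ℝ) ≤ n := by exact_mod_cast hjn
  have hc : (j : ℝ) * ((n : ℝ) - j + 1) = ((j * (n - j + 1) : ℕ) : ℝ) := by
    push_cast [hjn]; ring
  have key : j * (n - j + 1) * ((j - 1)! * (n - (j - 1))! * k ! * (n - k)!)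
      = (n - j + 1) ^ 2 * (j ! * (n - j)! * k ! * (n - k)!) := by
    have h2 : n - (j - 1) = (n - j) + 1 := by omega
    have h3 : j * (j - 1)! = j ! := Nat.mul_factorial_pred (by omega)
    rw [h2]
    have h4 : n - j + 1 = (n - j) + 1 := rfl
    rw [h4, Nat.factorial_succ, ← h3]
    ring
  rw [hc, Sq, Sq, ← Real.sqrt_mul (by positivity), ← Nat.cast_mul, key]
  have hcast : (((n - j + 1) ^ 2 * (j ! * (n - j)! * k ! * (n - k)!) : ℕ) : ℝ)
      = ((n : ℝ) - j + 1) ^ 2 * ((j ! * (n - j)! * k ! * (n - k)! : ℕ) : ℝ) := by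
    push_cast [hjn]; ring
  rw [hcast, Real.sqrt_mul (sq_nonneg _), Real.sqrt_sq (by linarith)]

lemma sqrtB {n j k : ℕ} (hjn : j + 1 ≤ n) :
    Real.sqrt ((j + 1) * ((n : ℝ) - j)) * Sq n (j + 1) k = ((j : ℝ) + 1) * Sq n j k := by
  have hjr : (j : ℝ) + 1 ≤ n := by exact_mod_cast hjn
  have hc : ((j : ℝ) + 1) * ((n : ℝ) - j) = (((j + 1) * (n - j) : ℕ) : ℝ) := by
    push_cast [show j ≤ n by omega]; ring
  have key : (j + 1) * (n - j) * ((j + 1)! * (n - (j + 1))! * k ! * (n - k)!)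
      = (j + 1) ^ 2 * (j ! * (n - j)! * k ! * (n - k)!) := by
    have h2 : n - (j + 1) = (n - j) - 1 := by omega
    have h3 : (n - j) * ((n - j) - 1)! = (n - j)! := Nat.mul_factorial_pred (by omega)
    rw [h2, Nat.factorial_succ, ← h3]
    ring
  rw [hc, Sq, Sq, ← Real.sqrt_mul (by positivity), ← Nat.cast_mul, key]
  have hcast : (((j + 1) ^ 2 * (j ! * (n - j)! * k ! * (n - k)!) : ℕ) : ℝ)
      = ((j : ℝ) + 1) ^ 2 * ((j ! * (n - j)! * k ! * (n - k)! : ℕ) : ℝ) := by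
    push_cast; ring
  rw [hcast, Real.sqrt_mul (sq_nonneg _), Real.sqrt_sq (by positivity)]


lemma coeff_main {n j k τ : ℕ} (hj : j ≤ n) (hk : k ≤ n)
    (hA : τ + 1 ≤ j) (hB : τ + 1 + k ≤ n) (hU : j ≤ τ + k) :
    w n j k τ * (((j - τ) + (n - k - τ) : ℕ) : ℝ)
      + w n j k (τ + 1) * (((τ + 1) + ((τ + 1) + k - j) : ℕ) : ℝ)
    = Real.sqrt (j * ((n : ℝ) - j + 1)) * w n (j - 1) k τ
      + Real.sqrt ((j + 1) * ((n : ℝ) - j)) * w n (j + 1) k (τ + 1) := by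
  have hD1 : den n j k τ * ((τ + 1) * ((τ + 1) + k - j))
      = (j - τ)! * (n - k - τ)! * (τ + 1)! * ((τ + 1) + k - j)! := by
    unfold den
    rw [show (τ + 1) + k - j = (τ + k - j) + 1 by omega, Nat.factorial_succ (τ + k - j),
      Nat.factorial_succ τ]
    ring
  have hD4 : den n j k (τ + 1) * ((j - τ) * (n - k - τ))
      = (j - τ)! * (n - k - τ)! * (τ + 1)! * ((τ + 1) + k - j)! := by
    unfold den
    rw [show j - (τ + 1) = (j - τ) - 1 by omega, show n - k - (τ + 1) = (n - k - τ) - 1 by omega]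
    have h1 : (j - τ) * ((j - τ) - 1)! = (j - τ)! := Nat.mul_factorial_pred (by omega)
    have h2 : (n - k - τ) * ((n - k - τ) - 1)! = (n - k - τ)! := Nat.mul_factorial_pred (by omega)
    rw [← h1, ← h2]; ring
  have hDm : den n (j - 1) k τ * ((j - τ) * (τ + 1))
      = (j - τ)! * (n - k - τ)! * (τ + 1)! * ((τ + 1) + k - j)! := by
    unfold den
    rw [show (j - 1) - τ = (j - τ) - 1 by omega, show τ + k - (j - 1) = (τ + 1) + k - j by omega,
      Nat.factorial_succ τ]
    have h1 : (j - τ) * ((j - τ) - 1)! = (j - τ)! := Nat.mul_factorial_pred (by omega)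
    rw [← h1]; ring
  have hDp : den n (j + 1) k (τ + 1) * ((n - k - τ) * ((τ + 1) + k - j))
      = (j - τ)! * (n - k - τ)! * (τ + 1)! * ((τ + 1) + k - j)! := by
    unfold den
    rw [show (j + 1) - (τ + 1) = j - τ by omega,
      show n - k - (τ + 1) = (n - k - τ) - 1 by omega,
      show (τ + 1) + k - (j + 1) = ((τ + 1) + k - j) - 1 by omega]
    have h1 : (n - k - τ) * ((n - k - τ) - 1)! = (n - k - τ)! := Nat.mul_factorial_pred (by omega)
    have h2 : ((τ + 1) + k - j) * (((τ + 1) + k - j) - 1)! = ((τ + 1) + k - j)! :=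
      Nat.mul_factorial_pred (by omega)
    rw [← h1, ← h2]; ring
  have hD1' : ((den n j k τ : ℕ) : ℝ) * (((τ + 1) * ((τ + 1) + k - j) : ℕ) : ℝ)
      = (((j - τ)! * (n - k - τ)! * (τ + 1)! * ((τ + 1) + k - j)! : ℕ) : ℝ) := by
    exact_mod_cast congrArg (Nat.cast : ℕ → ℝ) hD1
  have hD4' : ((den n j k (τ + 1) : ℕ) : ℝ) * (((j - τ) * (n - k - τ) : ℕ) : ℝ)
      = (((j - τ)! * (n - k - τ)! * (τ + 1)! * ((τ + 1) + k - j)! : ℕ) : ℝ) := by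
    exact_mod_cast congrArg (Nat.cast : ℕ → ℝ) hD4
  have hDm' : ((den n (j - 1) k τ : ℕ) : ℝ) * (((j - τ) * (τ + 1) : ℕ) : ℝ)
      = (((j - τ)! * (n - k - τ)! * (τ + 1)! * ((τ + 1) + k - j)! : ℕ) : ℝ) := by
    exact_mod_cast congrArg (Nat.cast : ℕ → ℝ) hDm
  have hDp' : ((den n (j + 1) k (τ + 1) : ℕ) : ℝ) * (((n - k - τ) * ((τ + 1) + k - j) : ℕ) : ℝ)
      = (((j - τ)! * (n - k - τ)! * (τ + 1)! * ((τ + 1) + k - j)! : ℕ) : ℝ) := by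
    exact_mod_cast congrArg (Nat.cast : ℕ → ℝ) hDp
  have hm1 : (((τ + 1) * ((τ + 1) + k - j) : ℕ) : ℝ) ≠ 0 := by
    exact_mod_cast (Nat.mul_pos (by omega) (by omega : 0 < (τ + 1) + k - j)).ne'
  have hm4 : (((j - τ) * (n - k - τ) : ℕ) : ℝ) ≠ 0 := by
    exact_mod_cast (Nat.mul_pos (by omega : 0 < j - τ) (by omega : 0 < n - k - τ)).ne'
  have hmm : (((j - τ) * (τ + 1) : ℕ) : ℝ) ≠ 0 := by
    exact_mod_cast (Nat.mul_pos (by omega : 0 < j - τ) (by omega)).ne'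
  have hmp : (((n - k - τ) * ((τ + 1) + k - j) : ℕ) : ℝ) ≠ 0 := by
    exact_mod_cast (Nat.mul_pos (by omega : 0 < n - k - τ) (by omega : 0 < (τ + 1) + k - j)).ne'
  rw [w_def, w_def, w_def, w_def, div_mul_eq_mul_div, div_mul_eq_mul_div,
    ← mul_div_assoc, ← mul_div_assoc, sqrtA (by omega) hj, sqrtB (by omega),
    div_trick hm1 hD1', div_trick hm4 hD4', div_trick hmm hDm', div_trick hmp hDp',
    ← add_div, ← add_div]
  congr 1
  have harith : ((((j - τ) + (n - k - τ) : ℕ) : ℝ) * (((τ + 1) * ((τ + 1) + k - j) : ℕ) : ℝ)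
      + (((τ + 1) + ((τ + 1) + k - j) : ℕ) : ℝ) * (((j - τ) * (n - k - τ) : ℕ) : ℝ))
      = ((n : ℝ) - j + 1) * (((j - τ) * (τ + 1) : ℕ) : ℝ)
        + ((j : ℝ) + 1) * (((n - k - τ) * ((τ + 1) + k - j) : ℕ) : ℝ) := by
    push_cast [Nat.cast_sub (show τ ≤ j by omega), Nat.cast_sub (show τ ≤ n - k by omega),
      Nat.cast_sub hk, Nat.cast_sub (show j ≤ (τ + 1) + k by omega)]
    ring
  linear_combination Sq n j k * harith

lemma coeff_U {n j k τ : ℕ} (hB : τ + 1 + k ≤ n) (hU : j = τ + k + 1) :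
    w n j k (τ + 1) * (((τ + 1) + ((τ + 1) + k - j) : ℕ) : ℝ)
      = Real.sqrt (j * ((n : ℝ) - j + 1)) * w n (j - 1) k τ := by
  have hD4 : den n j k (τ + 1) * (n - k - τ) = (j - (τ + 1))! * (n - k - τ)! * (τ + 1)! := by
    unfold den
    rw [show (τ + 1) + k - j = 0 by omega, Nat.factorial_zero,
      show n - k - (τ + 1) = (n - k - τ) - 1 by omega]
    have h2 : (n - k - τ) * ((n - k - τ) - 1)! = (n - k - τ)! := Nat.mul_factorial_pred (by omega)
    rw [← h2]; ring
  have hDm : den n (j - 1) k τ * (τ + 1) = (j - (τ + 1))! * (n - k - τ)! * (τ + 1)! := by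
    unfold den
    rw [show (j - 1) - τ = j - (τ + 1) by omega, show τ + k - (j - 1) = 0 by omega,
      Nat.factorial_zero, Nat.factorial_succ τ]
    ring
  have hD4' : ((den n j k (τ + 1) : ℕ) : ℝ) * ((n - k - τ : ℕ) : ℝ)
      = (((j - (τ + 1))! * (n - k - τ)! * (τ + 1)! : ℕ) : ℝ) := by
    exact_mod_cast congrArg (Nat.cast : ℕ → ℝ) hD4
  have hDm' : ((den n (j - 1) k τ : ℕ) : ℝ) * ((τ + 1 : ℕ) : ℝ)
      = (((j - (τ + 1))! * (n - k - τ)! * (τ + 1)! : ℕ) : ℝ) := by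
    exact_mod_cast congrArg (Nat.cast : ℕ → ℝ) hDm
  have hm4 : ((n - k - τ : ℕ) : ℝ) ≠ 0 := by
    exact_mod_cast (show 0 < n - k - τ by omega).ne'
  have hmm : ((τ + 1 : ℕ) : ℝ) ≠ 0 := by positivity
  rw [w_def, w_def, div_mul_eq_mul_div, ← mul_div_assoc, sqrtA (by omega) (by omega),
    div_trick hm4 hD4', div_trick hmm hDm']
  congr 1
  have harith : (((τ + 1) + ((τ + 1) + k - j) : ℕ) : ℝ) * ((n - k - τ : ℕ) : ℝ)
      = ((n : ℝ) - j + 1) * ((τ + 1 : ℕ) : ℝ) := by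
    rw [show (τ + 1) + k - j = 0 by omega]
    push_cast [Nat.cast_sub (show τ ≤ n - k by omega), Nat.cast_sub (show k ≤ n by omega)]
    have : (j : ℝ) = τ + k + 1 := by exact_mod_cast congrArg (Nat.cast : ℕ → ℝ) hU
    rw [this]; ring
  linear_combination Sq n j k * harith

lemma coeff_A {n j k τ : ℕ} (hτ : j = τ) (hB : τ + 1 + k ≤ n) :
    w n j k τ * (((j - τ) + (n - k - τ) : ℕ) : ℝ)
      = Real.sqrt ((j + 1) * ((n : ℝ) - j)) * w n (j + 1) k (τ + 1) := by
  have hD1 : den n j k τ * (τ + 1) = (n - k - τ)! * (τ + 1)! * (τ + k - j)! := by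
    unfold den
    rw [show j - τ = 0 by omega, Nat.factorial_zero, Nat.factorial_succ τ]
    ring
  have hDp : den n (j + 1) k (τ + 1) * (n - k - τ)
      = (n - k - τ)! * (τ + 1)! * (τ + k - j)! := by
    unfold den
    rw [show (j + 1) - (τ + 1) = 0 by omega, Nat.factorial_zero,
      show n - k - (τ + 1) = (n - k - τ) - 1 by omega,
      show (τ + 1) + k - (j + 1) = τ + k - j by omega]
    have h2 : (n - k - τ) * ((n - k - τ) - 1)! = (n - k - τ)! := Nat.mul_factorial_pred (by omega)
    rw [← h2]; ring
  have hD1' : ((den n j k τ : ℕ) : ℝ) * ((τ + 1 : ℕ) : ℝ)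
      = (((n - k - τ)! * (τ + 1)! * (τ + k - j)! : ℕ) : ℝ) := by
    exact_mod_cast congrArg (Nat.cast : ℕ → ℝ) hD1
  have hDp' : ((den n (j + 1) k (τ + 1) : ℕ) : ℝ) * ((n - k - τ : ℕ) : ℝ)
      = (((n - k - τ)! * (τ + 1)! * (τ + k - j)! : ℕ) : ℝ) := by
    exact_mod_cast congrArg (Nat.cast : ℕ → ℝ) hDp
  have hm1 : ((τ + 1 : ℕ) : ℝ) ≠ 0 := by positivity
  have hmp : ((n - k - τ : ℕ) : ℝ) ≠ 0 := by
    exact_mod_cast (show 0 < n - k - τ by omega).ne'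
  rw [w_def, w_def, div_mul_eq_mul_div, ← mul_div_assoc, sqrtB (by omega),
    div_trick hm1 hD1', div_trick hmp hDp']
  congr 1
  have harith : (((j - τ) + (n - k - τ) : ℕ) : ℝ) * ((τ + 1 : ℕ) : ℝ)
      = ((j : ℝ) + 1) * ((n - k - τ : ℕ) : ℝ) := by
    rw [show j - τ = 0 by omega]
    push_cast
    have : (j : ℝ) = τ := by exact_mod_cast congrArg (Nat.cast : ℕ → ℝ) hτ
    rw [this]; ring
  linear_combination Sq n j k * harith

lemma coeff_B {n j k τ : ℕ} (hA : τ + 1 ≤ j) (hBB : τ + k = n) (hU : j ≤ τ + k) :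
    w n j k τ * (((j - τ) + (n - k - τ) : ℕ) : ℝ)
      = Real.sqrt (j * ((n : ℝ) - j + 1)) * w n (j - 1) k τ := by
  have hD1 : den n j k τ * ((τ + 1) + k - j) = (j - τ)! * τ ! * ((τ + 1) + k - j)! := by
    unfold den
    rw [show n - k - τ = 0 by omega, Nat.factorial_zero,
      show (τ + 1) + k - j = (τ + k - j) + 1 by omega, Nat.factorial_succ (τ + k - j)]
    ring
  have hDm : den n (j - 1) k τ * (j - τ) = (j - τ)! * τ ! * ((τ + 1) + k - j)! := by
    unfold den
    rw [show (j - 1) - τ = (j - τ) - 1 by omega, show τ + k - (j - 1) = (τ + 1) + k - j by omega,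
      show n - k - τ = 0 by omega, Nat.factorial_zero]
    have h1 : (j - τ) * ((j - τ) - 1)! = (j - τ)! := Nat.mul_factorial_pred (by omega)
    rw [← h1]; ring
  have hD1' : ((den n j k τ : ℕ) : ℝ) * (((τ + 1) + k - j : ℕ) : ℝ)
      = (((j - τ)! * τ ! * ((τ + 1) + k - j)! : ℕ) : ℝ) := by
    exact_mod_cast congrArg (Nat.cast : ℕ → ℝ) hD1
  have hDm' : ((den n (j - 1) k τ : ℕ) : ℝ) * ((j - τ : ℕ) : ℝ)
      = (((j - τ)! * τ ! * ((τ + 1) + k - j)! : ℕ) : ℝ) := by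
    exact_mod_cast congrArg (Nat.cast : ℕ → ℝ) hDm
  have hm1 : (((τ + 1) + k - j : ℕ) : ℝ) ≠ 0 := by
    exact_mod_cast (show 0 < (τ + 1) + k - j by omega).ne'
  have hmm : ((j - τ : ℕ) : ℝ) ≠ 0 := by
    exact_mod_cast (show 0 < j - τ by omega).ne'
  rw [w_def, w_def, div_mul_eq_mul_div, ← mul_div_assoc, sqrtA (by omega) (by omega),
    div_trick hm1 hD1', div_trick hmm hDm']
  congr 1
  have harith : (((j - τ) + (n - k - τ) : ℕ) : ℝ) * (((τ + 1) + k - j : ℕ) : ℝ)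
      = ((n : ℝ) - j + 1) * ((j - τ : ℕ) : ℝ) := by
    rw [show n - k - τ = 0 by omega]
    push_cast [Nat.cast_sub (show τ ≤ j by omega), Nat.cast_sub (show j ≤ (τ + 1) + k by omega)]
    have : (n : ℝ) = τ + k := by exact_mod_cast congrArg (Nat.cast : ℕ → ℝ) hBB.symm
    rw [this]; ring
  linear_combination Sq n j k * harith

lemma coeff0 {n j k : ℕ} (hjk : j < k) (hk : k ≤ n) :
    w n j k 0 * ((0 + (0 + k - j) : ℕ) : ℝ)
      = Real.sqrt ((j + 1) * ((n : ℝ) - j)) * w n (j + 1) k 0 := by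
  have hD1 : den n j k 0 * (j + 1) = (j + 1)! * (n - k)! * (k - j)! := by
    unfold den
    rw [show j - 0 = j by omega, show n - k - 0 = n - k by omega, Nat.factorial_zero,
      show 0 + k - j = k - j by omega, Nat.factorial_succ j]
    ring
  have hDp : den n (j + 1) k 0 * (k - j) = (j + 1)! * (n - k)! * (k - j)! := by
    unfold den
    rw [show j + 1 - 0 = j + 1 by omega, show n - k - 0 = n - k by omega, Nat.factorial_zero,
      show 0 + k - (j + 1) = (k - j) - 1 by omega]
    have h1 : (k - j) * ((k - j) - 1)! = (k - j)! := Nat.mul_factorial_pred (by omega)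
    rw [← h1]; ring
  have hD1' : ((den n j k 0 : ℕ) : ℝ) * ((j + 1 : ℕ) : ℝ)
      = (((j + 1)! * (n - k)! * (k - j)! : ℕ) : ℝ) := by
    exact_mod_cast congrArg (Nat.cast : ℕ → ℝ) hD1
  have hDp' : ((den n (j + 1) k 0 : ℕ) : ℝ) * ((k - j : ℕ) : ℝ)
      = (((j + 1)! * (n - k)! * (k - j)! : ℕ) : ℝ) := by
    exact_mod_cast congrArg (Nat.cast : ℕ → ℝ) hDp
  have hm1 : ((j + 1 : ℕ) : ℝ) ≠ 0 := by positivity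
  have hmp : ((k - j : ℕ) : ℝ) ≠ 0 := by
    exact_mod_cast (show 0 < k - j by omega).ne'
  rw [w_def, w_def, div_mul_eq_mul_div, ← mul_div_assoc, sqrtB (by omega),
    div_trick hm1 hD1', div_trick hmp hDp']
  congr 1
  have harith : ((0 + (0 + k - j) : ℕ) : ℝ) * ((j + 1 : ℕ) : ℝ)
      = ((j : ℝ) + 1) * ((k - j : ℕ) : ℝ) := by
    rw [show 0 + (0 + k - j) = k - j by omega, Nat.cast_sub (show j ≤ k by omega)]
    push_cast
    ring
  linear_combination Sq n j k * harith

noncomputable def uqp (n j k t : ℕ) (c s : ℂ) : ℂ :=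
  if t ≤ j ∧ t + k ≤ n ∧ j ≤ t + k then
    ((w n j k t * ((t + (t + k - j) : ℕ) : ℝ) / 2 : ℝ) : ℂ)
      * c ^ ((j - t) + (n - k - t) + 1) * s ^ (t + (t + k - j) - 1)
  else 0

noncomputable def upp (n j k t : ℕ) (c s : ℂ) : ℂ :=
  if t ≤ j ∧ t + k ≤ n ∧ j ≤ t + k then
    ((w n j k t * (((j - t) + (n - k - t) : ℕ) : ℝ) / 2 : ℝ) : ℂ)
      * c ^ ((j - t) + (n - k - t) - 1) * s ^ (t + (t + k - j) + 1)
  else 0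

noncomputable def uat (n j k t : ℕ) (c s : ℂ) : ℂ :=
  if t ≤ j - 1 ∧ t + k ≤ n ∧ j - 1 ≤ t + k then
    ((Real.sqrt (j * ((n : ℝ) - j + 1)) * w n (j - 1) k t / 2 : ℝ) : ℂ)
      * c ^ ((j - 1 - t) + (n - k - t)) * s ^ (t + (t + k - (j - 1)))
  else 0

noncomputable def ubt (n j k t : ℕ) (c s : ℂ) : ℂ :=
  if t ≤ j + 1 ∧ t + k ≤ n ∧ j + 1 ≤ t + k then
    ((Real.sqrt ((j + 1) * ((n : ℝ) - j)) * w n (j + 1) k t / 2 : ℝ) : ℂ)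
      * c ^ ((j + 1 - t) + (n - k - t)) * s ^ (t + (t + k - (j + 1)))
  else 0

lemma step {n j k : ℕ} (τ : ℕ) (hj : j ≤ n) (hk : k ≤ n) (c s : ℂ) :
    upp n j k τ c s + uqp n j k (τ + 1) c s
      = uat n j k τ c s + ubt n j k (τ + 1) c s := by
  unfold upp uqp uat ubt
  by_cases hU : j ≤ τ + k
  · by_cases hA : τ + 1 ≤ j
    · by_cases hB : τ + 1 + k ≤ n
      · -- main case, all guards true
        rw [if_pos (show τ ≤ j ∧ τ + k ≤ n ∧ j ≤ τ + k by omega),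
          if_pos (show τ + 1 ≤ j ∧ τ + 1 + k ≤ n ∧ j ≤ τ + 1 + k by omega),
          if_pos (show τ ≤ j - 1 ∧ τ + k ≤ n ∧ j - 1 ≤ τ + k by omega),
          if_pos (show τ + 1 ≤ j + 1 ∧ τ + 1 + k ≤ n ∧ j + 1 ≤ τ + 1 + k by omega)]
        rw [show (j - (τ + 1)) + (n - k - (τ + 1)) + 1 = (j - τ) + (n - k - τ) - 1 by omega,
          show (τ + 1) + ((τ + 1) + k - j) - 1 = τ + (τ + k - j) + 1 by omega,
          show (j - 1 - τ) + (n - k - τ) = (j - τ) + (n - k - τ) - 1 by omega,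
          show τ + (τ + k - (j - 1)) = τ + (τ + k - j) + 1 by omega,
          show (j + 1 - (τ + 1)) + (n - k - (τ + 1)) = (j - τ) + (n - k - τ) - 1 by omega,
          show (τ + 1) + ((τ + 1) + k - (j + 1)) = τ + (τ + k - j) + 1 by omega]
        have hc := coeff_main hj hk hA hB hU
        have hcR : w n j k τ * (((j - τ) + (n - k - τ) : ℕ) : ℝ) / 2
            + w n j k (τ + 1) * (((τ + 1) + ((τ + 1) + k - j) : ℕ) : ℝ) / 2
            = Real.sqrt (j * ((n : ℝ) - j + 1)) * w n (j - 1) k τ / 2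
              + Real.sqrt ((j + 1) * ((n : ℝ) - j)) * w n (j + 1) k (τ + 1) / 2 := by
          linarith [hc]
        have hcC : ((w n j k τ * (((j - τ) + (n - k - τ) : ℕ) : ℝ) / 2 : ℝ) : ℂ)
            + ((w n j k (τ + 1) * (((τ + 1) + ((τ + 1) + k - j) : ℕ) : ℝ) / 2 : ℝ) : ℂ)
            = ((Real.sqrt (j * ((n : ℝ) - j + 1)) * w n (j - 1) k τ / 2 : ℝ) : ℂ)
              + ((Real.sqrt ((j + 1) * ((n : ℝ) - j)) * w n (j + 1) k (τ + 1) / 2 : ℝ) : ℂ) := by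
          exact_mod_cast hcR
        linear_combination (c ^ ((j - τ) + (n - k - τ) - 1) * s ^ (τ + (τ + k - j) + 1)) * hcC
      · -- Bb ≤ 0
        rw [if_neg (show ¬(τ + 1 ≤ j ∧ τ + 1 + k ≤ n ∧ j ≤ τ + 1 + k) by omega),
          if_neg (show ¬(τ + 1 ≤ j + 1 ∧ τ + 1 + k ≤ n ∧ j + 1 ≤ τ + 1 + k) by omega)]
        by_cases hBB : τ + k = n
        · rw [if_pos (show τ ≤ j ∧ τ + k ≤ n ∧ j ≤ τ + k by omega),
            if_pos (show τ ≤ j - 1 ∧ τ + k ≤ n ∧ j - 1 ≤ τ + k by omega)]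
          rw [show (j - 1 - τ) + (n - k - τ) = (j - τ) + (n - k - τ) - 1 by omega,
            show τ + (τ + k - (j - 1)) = τ + (τ + k - j) + 1 by omega]
          have hc := coeff_B hA hBB hU
          have hcR : w n j k τ * (((j - τ) + (n - k - τ) : ℕ) : ℝ) / 2
              = Real.sqrt (j * ((n : ℝ) - j + 1)) * w n (j - 1) k τ / 2 := by linarith [hc]
          have hcC : ((w n j k τ * (((j - τ) + (n - k - τ) : ℕ) : ℝ) / 2 : ℝ) : ℂ)
              = ((Real.sqrt (j * ((n : ℝ) - j + 1)) * w n (j - 1) k τ / 2 : ℝ) : ℂ) := by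
            exact_mod_cast hcR
          linear_combination (c ^ ((j - τ) + (n - k - τ) - 1) * s ^ (τ + (τ + k - j) + 1)) * hcC
        · rw [if_neg (show ¬(τ ≤ j ∧ τ + k ≤ n ∧ j ≤ τ + k) by omega),
            if_neg (show ¬(τ ≤ j - 1 ∧ τ + k ≤ n ∧ j - 1 ≤ τ + k) by omega)]
    · -- j ≤ τ
      rw [if_neg (show ¬(τ + 1 ≤ j ∧ τ + 1 + k ≤ n ∧ j ≤ τ + 1 + k) by omega)]
      by_cases hjτ : j = τ
      · by_cases hB : τ + 1 + k ≤ n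
        · rw [if_pos (show τ ≤ j ∧ τ + k ≤ n ∧ j ≤ τ + k by omega),
            if_pos (show τ + 1 ≤ j + 1 ∧ τ + 1 + k ≤ n ∧ j + 1 ≤ τ + 1 + k by omega)]
          have huat : (if τ ≤ j - 1 ∧ τ + k ≤ n ∧ j - 1 ≤ τ + k then
              ((Real.sqrt (j * ((n : ℝ) - j + 1)) * w n (j - 1) k τ / 2 : ℝ) : ℂ)
                * c ^ ((j - 1 - τ) + (n - k - τ)) * s ^ (τ + (τ + k - (j - 1)))
            else 0) = 0 := by
            by_cases hg : τ ≤ j - 1 ∧ τ + k ≤ n ∧ j - 1 ≤ τ + k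
            · rw [if_pos hg]
              have hj0 : j = 0 := by omega
              rw [hj0]
              norm_num
            · rw [if_neg hg]
          rw [huat, zero_add]
          rw [show (j - τ) + (n - k - τ) - 1 = (j + 1 - (τ + 1)) + (n - k - (τ + 1)) by omega,
            show τ + (τ + k - j) + 1 = (τ + 1) + ((τ + 1) + k - (j + 1)) by omega]
          have hc := coeff_A hjτ hB
          have hcR : w n j k τ * (((j - τ) + (n - k - τ) : ℕ) : ℝ) / 2
              = Real.sqrt ((j + 1) * ((n : ℝ) - j)) * w n (j + 1) k (τ + 1) / 2 := by
            linarith [hc]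
          have hcC : ((w n j k τ * (((j - τ) + (n - k - τ) : ℕ) : ℝ) / 2 : ℝ) : ℂ)
              = ((Real.sqrt ((j + 1) * ((n : ℝ) - j)) * w n (j + 1) k (τ + 1) / 2 : ℝ) : ℂ) := by
            exact_mod_cast hcR
          linear_combination (c ^ ((j + 1 - (τ + 1)) + (n - k - (τ + 1)))
            * s ^ ((τ + 1) + ((τ + 1) + k - (j + 1)))) * hcC
        · -- τ+1+k > n
          rw [if_neg (show ¬(τ + 1 ≤ j + 1 ∧ τ + 1 + k ≤ n ∧ j + 1 ≤ τ + 1 + k) by omega)]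
          have hupp : (if τ ≤ j ∧ τ + k ≤ n ∧ j ≤ τ + k then
              ((w n j k τ * (((j - τ) + (n - k - τ) : ℕ) : ℝ) / 2 : ℝ) : ℂ)
                * c ^ ((j - τ) + (n - k - τ) - 1) * s ^ (τ + (τ + k - j) + 1)
            else 0) = 0 := by
            by_cases hg : τ ≤ j ∧ τ + k ≤ n ∧ j ≤ τ + k
            · rw [if_pos hg, show (j - τ) + (n - k - τ) = 0 by omega]
              norm_num
            · rw [if_neg hg]
          rw [hupp, zero_add]
          have huat : (if τ ≤ j - 1 ∧ τ + k ≤ n ∧ j - 1 ≤ τ + k then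
              ((Real.sqrt (j * ((n : ℝ) - j + 1)) * w n (j - 1) k τ / 2 : ℝ) : ℂ)
                * c ^ ((j - 1 - τ) + (n - k - τ)) * s ^ (τ + (τ + k - (j - 1)))
            else 0) = 0 := by
            by_cases hg : τ ≤ j - 1 ∧ τ + k ≤ n ∧ j - 1 ≤ τ + k
            · rw [if_pos hg]
              have hj0 : j = 0 := by omega
              rw [hj0]
              norm_num
            · rw [if_neg hg]
          rw [huat, zero_add]
      · -- j < τ : everything zero
        rw [if_neg (show ¬(τ ≤ j ∧ τ + k ≤ n ∧ j ≤ τ + k) by omega),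
          if_neg (show ¬(τ ≤ j - 1 ∧ τ + k ≤ n ∧ j - 1 ≤ τ + k) by omega),
          if_neg (show ¬(τ + 1 ≤ j + 1 ∧ τ + 1 + k ≤ n ∧ j + 1 ≤ τ + 1 + k) by omega)]
  · -- j > τ + k
    by_cases hU1 : j = τ + k + 1
    · by_cases hB : τ + 1 + k ≤ n
      · rw [if_neg (show ¬(τ ≤ j ∧ τ + k ≤ n ∧ j ≤ τ + k) by omega),
          if_neg (show ¬(τ + 1 ≤ j + 1 ∧ τ + 1 + k ≤ n ∧ j + 1 ≤ τ + 1 + k) by omega),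
          if_pos (show τ + 1 ≤ j ∧ τ + 1 + k ≤ n ∧ j ≤ τ + 1 + k by omega),
          if_pos (show τ ≤ j - 1 ∧ τ + k ≤ n ∧ j - 1 ≤ τ + k by omega)]
        rw [show (j - (τ + 1)) + (n - k - (τ + 1)) + 1 = (j - 1 - τ) + (n - k - τ) by omega,
          show (τ + 1) + ((τ + 1) + k - j) - 1 = τ + (τ + k - (j - 1)) by omega]
        have hc := coeff_U hB hU1
        have hcR : w n j k (τ + 1) * (((τ + 1) + ((τ + 1) + k - j) : ℕ) : ℝ) / 2
            = Real.sqrt (j * ((n : ℝ) - j + 1)) * w n (j - 1) k τ / 2 := by linarith [hc]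
        have hcC : ((w n j k (τ + 1) * (((τ + 1) + ((τ + 1) + k - j) : ℕ) : ℝ) / 2 : ℝ) : ℂ)
            = ((Real.sqrt (j * ((n : ℝ) - j + 1)) * w n (j - 1) k τ / 2 : ℝ) : ℂ) := by
          exact_mod_cast hcR
        linear_combination (c ^ ((j - 1 - τ) + (n - k - τ)) * s ^ (τ + (τ + k - (j - 1)))) * hcC
      · rw [if_neg (show ¬(τ ≤ j ∧ τ + k ≤ n ∧ j ≤ τ + k) by omega),
          if_neg (show ¬(τ + 1 ≤ j ∧ τ + 1 + k ≤ n ∧ j ≤ τ + 1 + k) by omega),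
          if_neg (show ¬(τ ≤ j - 1 ∧ τ + k ≤ n ∧ j - 1 ≤ τ + k) by omega),
          if_neg (show ¬(τ + 1 ≤ j + 1 ∧ τ + 1 + k ≤ n ∧ j + 1 ≤ τ + 1 + k) by omega)]
    · rw [if_neg (show ¬(τ ≤ j ∧ τ + k ≤ n ∧ j ≤ τ + k) by omega),
        if_neg (show ¬(τ + 1 ≤ j ∧ τ + 1 + k ≤ n ∧ j ≤ τ + 1 + k) by omega),
        if_neg (show ¬(τ ≤ j - 1 ∧ τ + k ≤ n ∧ j - 1 ≤ τ + k) by omega),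
        if_neg (show ¬(τ + 1 ≤ j + 1 ∧ τ + 1 + k ≤ n ∧ j + 1 ≤ τ + 1 + k) by omega)]

lemma psi0 {n j k : ℕ} (hj : j ≤ n) (hk : k ≤ n) (c s : ℂ) :
    uqp n j k 0 c s = ubt n j k 0 c s := by
  unfold uqp ubt
  by_cases hjk : j < k ∧ k ≤ n
  · rw [if_pos (show 0 ≤ j ∧ 0 + k ≤ n ∧ j ≤ 0 + k by omega),
      if_pos (show 0 ≤ j + 1 ∧ 0 + k ≤ n ∧ j + 1 ≤ 0 + k by omega),
      show (j - 0) + (n - k - 0) + 1 = (j + 1 - 0) + (n - k - 0) by omega,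
      show 0 + (0 + k - j) - 1 = 0 + (0 + k - (j + 1)) by omega]
    have hc := coeff0 hjk.1 hjk.2
    have hcR : w n j k 0 * ((0 + (0 + k - j) : ℕ) : ℝ) / 2
        = Real.sqrt ((j + 1) * ((n : ℝ) - j)) * w n (j + 1) k 0 / 2 := by linarith [hc]
    have hcC : ((w n j k 0 * ((0 + (0 + k - j) : ℕ) : ℝ) / 2 : ℝ) : ℂ)
        = ((Real.sqrt ((j + 1) * ((n : ℝ) - j)) * w n (j + 1) k 0 / 2 : ℝ) : ℂ) := by
      exact_mod_cast hcR
    rw [hcC]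
  · by_cases hjk2 : j = k
    · rw [if_pos (show 0 ≤ j ∧ 0 + k ≤ n ∧ j ≤ 0 + k by omega),
        if_neg (show ¬(0 ≤ j + 1 ∧ 0 + k ≤ n ∧ j + 1 ≤ 0 + k) by omega),
        show 0 + (0 + k - j) = 0 by omega]
      norm_num
    · rw [if_neg (show ¬(0 ≤ j ∧ 0 + k ≤ n ∧ j ≤ 0 + k) by omega),
        if_neg (show ¬(0 ≤ j + 1 ∧ 0 + k ≤ n ∧ j + 1 ≤ 0 + k) by omega)]

lemma phin {n j k : ℕ} (hj : j ≤ n) (hk : k ≤ n) (c s : ℂ) :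
    upp n j k n c s = uat n j k n c s := by
  unfold upp uat
  have h1 : (if n ≤ j ∧ n + k ≤ n ∧ j ≤ n + k then
      ((w n j k n * (((j - n) + (n - k - n) : ℕ) : ℝ) / 2 : ℝ) : ℂ)
        * c ^ ((j - n) + (n - k - n) - 1) * s ^ (n + (n + k - j) + 1)
    else 0) = 0 := by
    by_cases hg : n ≤ j ∧ n + k ≤ n ∧ j ≤ n + k
    · rw [if_pos hg, show (j - n) + (n - k - n) = 0 by omega]
      norm_num
    · rw [if_neg hg]
  have h2 : (if n ≤ j - 1 ∧ n + k ≤ n ∧ j - 1 ≤ n + k then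
      ((Real.sqrt (j * ((n : ℝ) - j + 1)) * w n (j - 1) k n / 2 : ℝ) : ℂ)
        * c ^ ((j - 1 - n) + (n - k - n)) * s ^ (n + (n + k - (j - 1)))
    else 0) = 0 := by
    by_cases hg : n ≤ j - 1 ∧ n + k ≤ n ∧ j - 1 ≤ n + k
    · rw [if_pos hg]
      have hj0 : j = 0 := by omega
      rw [hj0]
      norm_num
    · rw [if_neg hg]
  rw [h1, h2]

lemma sum_key {n j k : ℕ} (hj : j ≤ n) (hk : k ≤ n) (c s : ℂ) :
    ∑ t ∈ Finset.range (n + 1),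
        ((-1 : ℂ) ^ t * uqp n j k t c s - (-1 : ℂ) ^ t * upp n j k t c s)
      = ∑ t ∈ Finset.range (n + 1),
        ((-1 : ℂ) ^ t * ubt n j k t c s - (-1 : ℂ) ^ t * uat n j k t c s) := by
  have key : ∀ τ : ℕ,
      (-1 : ℂ) ^ (τ + 1) * (uqp n j k (τ + 1) c s - ubt n j k (τ + 1) c s)
        = (-1 : ℂ) ^ τ * (upp n j k τ c s - uat n j k τ c s) := by
    intro τ
    have hs := step τ hj hk c s
    rw [pow_succ]
    linear_combination (-(-1 : ℂ) ^ τ) * hs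
  have h1 : ∑ t ∈ Finset.range (n + 1),
        (-1 : ℂ) ^ t * (uqp n j k t c s - ubt n j k t c s)
      = ∑ t ∈ Finset.range (n + 1),
        (-1 : ℂ) ^ t * (upp n j k t c s - uat n j k t c s) := by
    rw [Finset.sum_range_succ' (fun t => (-1 : ℂ) ^ t * (uqp n j k t c s - ubt n j k t c s)) n,
      Finset.sum_range_succ (fun t => (-1 : ℂ) ^ t * (upp n j k t c s - uat n j k t c s)) n,
      psi0 hj hk c s, phin hj hk c s]
    simp only [sub_self, mul_zero, add_zero]
    exact Finset.sum_congr rfl fun i _ => key i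
  calc ∑ t ∈ Finset.range (n + 1),
        ((-1 : ℂ) ^ t * uqp n j k t c s - (-1 : ℂ) ^ t * upp n j k t c s)
      = ∑ t ∈ Finset.range (n + 1),
          ((-1 : ℂ) ^ t * (uqp n j k t c s - ubt n j k t c s)
            + ((-1 : ℂ) ^ t * ubt n j k t c s - (-1 : ℂ) ^ t * upp n j k t c s)) := by
        refine Finset.sum_congr rfl fun t _ => by ring
    _ = ∑ t ∈ Finset.range (n + 1),
          ((-1 : ℂ) ^ t * (upp n j k t c s - uat n j k t c s)
            + ((-1 : ℂ) ^ t * ubt n j k t c s - (-1 : ℂ) ^ t * upp n j k t c s)) := by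
        rw [Finset.sum_add_distrib, Finset.sum_add_distrib, h1]
    _ = ∑ t ∈ Finset.range (n + 1),
          ((-1 : ℂ) ^ t * ubt n j k t c s - (-1 : ℂ) ^ t * uat n j k t c s) := by
        refine Finset.sum_congr rfl fun t _ => by ring

noncomputable def dTerm (n j k t : ℕ) (θ : ℝ) : ℂ :=
  if t ≤ j ∧ t + k ≤ n ∧ j ≤ t + k then
    (-1 : ℂ) ^ t *
      ((Real.sqrt ((j ! * (n - j)! * k ! * (n - k)! : ℕ)) /
        (((j - t)! * (n - k - t)! * t ! * (t + k - j)! : ℕ)) : ℝ) : ℂ) *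
      ((Real.cos (θ / 2) : ℂ) ^ ((j - t) + (n - k - t))) *
      ((Real.sin (θ / 2) : ℂ) ^ (t + (t + k - j)))
  else 0

noncomputable def dE (n j k : ℕ) (θ : ℝ) : ℂ :=
  ∑ t ∈ Finset.range (n + 1), dTerm n j k t θ

lemma hasDerivAt_cosC (θ : ℝ) :
    HasDerivAt (fun θ : ℝ => ((Real.cos (θ / 2) : ℝ) : ℂ))
      (((-Real.sin (θ / 2) * (1 / 2) : ℝ)) : ℂ) θ := by
  apply HasDerivAt.ofReal_comp
  exact (Real.hasDerivAt_cos (θ / 2)).comp θ ((hasDerivAt_id θ).div_const 2)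

lemma hasDerivAt_sinC (θ : ℝ) :
    HasDerivAt (fun θ : ℝ => ((Real.sin (θ / 2) : ℝ) : ℂ))
      (((Real.cos (θ / 2) * (1 / 2) : ℝ)) : ℂ) θ := by
  apply HasDerivAt.ofReal_comp
  exact (Real.hasDerivAt_sin (θ / 2)).comp θ ((hasDerivAt_id θ).div_const 2)

lemma hasDerivAt_dTerm (n j k t : ℕ) (θ : ℝ) :
    HasDerivAt (fun θ => dTerm n j k t θ)
      ((-1 : ℂ) ^ t * uqp n j k t (Real.cos (θ / 2) : ℂ) (Real.sin (θ / 2) : ℂ)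
        - (-1 : ℂ) ^ t * upp n j k t (Real.cos (θ / 2) : ℂ) (Real.sin (θ / 2) : ℂ)) θ := by
  by_cases h : t ≤ j ∧ t + k ≤ n ∧ j ≤ t + k
  · simp only [dTerm, uqp, upp, if_pos h]
    have hcp : HasDerivAt (fun θ : ℝ => ((Real.cos (θ / 2) : ℝ) : ℂ) ^ ((j - t) + (n - k - t)))
        ((((j - t) + (n - k - t) : ℕ) : ℂ) *
          ((Real.cos (θ / 2) : ℝ) : ℂ) ^ ((j - t) + (n - k - t) - 1) *
          ((-Real.sin (θ / 2) * (1 / 2) : ℝ) : ℂ)) θ :=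
      HasDerivAt.comp θ (hasDerivAt_pow _ _) (hasDerivAt_cosC θ)
    have hsp : HasDerivAt (fun θ : ℝ => ((Real.sin (θ / 2) : ℝ) : ℂ) ^ (t + (t + k - j)))
        (((t + (t + k - j) : ℕ) : ℂ) *
          ((Real.sin (θ / 2) : ℝ) : ℂ) ^ (t + (t + k - j) - 1) *
          ((Real.cos (θ / 2) * (1 / 2) : ℝ) : ℂ)) θ :=
      HasDerivAt.comp θ (hasDerivAt_pow _ _) (hasDerivAt_sinC θ)
    have H := (hcp.fun_mul hsp).const_mul
      ((-1 : ℂ) ^ t * ((Real.sqrt ((j ! * (n - j)! * k ! * (n - k)! : ℕ)) /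
        (((j - t)! * (n - k - t)! * t ! * (t + k - j)! : ℕ)) : ℝ) : ℂ))
    have hfun : (fun θ : ℝ => ((-1 : ℂ) ^ t *
        ((Real.sqrt ((j ! * (n - j)! * k ! * (n - k)! : ℕ)) /
          (((j - t)! * (n - k - t)! * t ! * (t + k - j)! : ℕ)) : ℝ) : ℂ)) *
        (((Real.cos (θ / 2) : ℝ) : ℂ) ^ ((j - t) + (n - k - t)) *
          ((Real.sin (θ / 2) : ℝ) : ℂ) ^ (t + (t + k - j))))
        = fun θ : ℝ => (-1 : ℂ) ^ t *
          ((Real.sqrt ((j ! * (n - j)! * k ! * (n - k)! : ℕ)) /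
            (((j - t)! * (n - k - t)! * t ! * (t + k - j)! : ℕ)) : ℝ) : ℂ) *
          ((Real.cos (θ / 2) : ℂ) ^ ((j - t) + (n - k - t))) *
          ((Real.sin (θ / 2) : ℂ) ^ (t + (t + k - j))) := by
      funext θ; ring
    rw [hfun] at H
    refine H.congr_deriv ?_
    rw [show w n j k t = Real.sqrt ((j ! * (n - j)! * k ! * (n - k)! : ℕ)) /
      (((j - t)! * (n - k - t)! * t ! * (t + k - j)! : ℕ)) from rfl]
    push_cast
    ring
  · simp only [dTerm, uqp, upp, if_neg h]
    norm_num
    exact hasDerivAt_const θ 0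

lemma hasDerivAt_dE {n j k : ℕ} (hj : j ≤ n) (hk : k ≤ n) (θ : ℝ) :
    HasDerivAt (fun θ => dE n j k θ)
      (((Real.sqrt ((j + 1) * ((n : ℝ) - j)) / 2 : ℝ) : ℂ) * dE n (j + 1) k θ
        - ((Real.sqrt (j * ((n : ℝ) - j + 1)) / 2 : ℝ) : ℂ) * dE n (j - 1) k θ) θ := by
  have H : HasDerivAt (fun θ => dE n j k θ)
      (∑ t ∈ Finset.range (n + 1),
        ((-1 : ℂ) ^ t * uqp n j k t (Real.cos (θ / 2) : ℂ) (Real.sin (θ / 2) : ℂ)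
          - (-1 : ℂ) ^ t * upp n j k t (Real.cos (θ / 2) : ℂ) (Real.sin (θ / 2) : ℂ))) θ := by
    unfold dE
    exact HasDerivAt.fun_sum fun t _ => hasDerivAt_dTerm n j k t θ
  rw [sum_key hj hk] at H
  convert H using 1
  rw [Finset.sum_sub_distrib]
  have h1 : ∑ t ∈ Finset.range (n + 1),
      (-1 : ℂ) ^ t * ubt n j k t (Real.cos (θ / 2) : ℂ) (Real.sin (θ / 2) : ℂ)
      = ((Real.sqrt ((j + 1) * ((n : ℝ) - j)) / 2 : ℝ) : ℂ) * dE n (j + 1) k θ := by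
    unfold dE
    rw [Finset.mul_sum]
    refine Finset.sum_congr rfl fun t _ => ?_
    unfold ubt dTerm
    by_cases hg : t ≤ j + 1 ∧ t + k ≤ n ∧ j + 1 ≤ t + k
    · rw [if_pos hg, if_pos hg,
        show w n (j + 1) k t = Real.sqrt (((j + 1)! * (n - (j + 1))! * k ! * (n - k)! : ℕ)) /
          ((((j + 1) - t)! * (n - k - t)! * t ! * (t + k - (j + 1))! : ℕ)) from rfl]
      push_cast
      ring
    · rw [if_neg hg, if_neg hg, mul_zero, mul_zero]
  have h2 : ∑ t ∈ Finset.range (n + 1),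
      (-1 : ℂ) ^ t * uat n j k t (Real.cos (θ / 2) : ℂ) (Real.sin (θ / 2) : ℂ)
      = ((Real.sqrt (j * ((n : ℝ) - j + 1)) / 2 : ℝ) : ℂ) * dE n (j - 1) k θ := by
    unfold dE
    rw [Finset.mul_sum]
    refine Finset.sum_congr rfl fun t _ => ?_
    unfold uat dTerm
    by_cases hg : t ≤ j - 1 ∧ t + k ≤ n ∧ j - 1 ≤ t + k
    · rw [if_pos hg, if_pos hg,
        show w n (j - 1) k t = Real.sqrt (((j - 1)! * (n - (j - 1))! * k ! * (n - k)! : ℕ)) /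
          ((((j - 1) - t)! * (n - k - t)! * t ! * (t + k - (j - 1))! : ℕ)) from rfl]
      push_cast
      ring
    · rw [if_neg hg, if_neg hg, mul_zero, mul_zero]
  rw [h1, h2]

lemma dE_zero {n j k : ℕ} (hj : j ≤ n) (hk : k ≤ n) :
    dE n j k 0 = if j = k then 1 else 0 := by
  unfold dE dTerm
  rw [Finset.sum_eq_single 0]
  · simp only [zero_div, Real.sin_zero, Real.cos_zero, Complex.ofReal_zero, Complex.ofReal_one,
      one_pow, pow_zero]
    by_cases hjk : j = k
    · subst hjk
      rw [if_pos (show 0 ≤ j ∧ 0 + j ≤ n ∧ j ≤ 0 + j by omega), if_pos rfl]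
      rw [show 0 + (0 + j - j) = 0 by omega]
      rw [show (j ! * (n - j)! * j ! * (n - j)! : ℕ) = (j ! * (n - j)!) * (j ! * (n - j)!) by ring]
      rw [show j - 0 = j by omega, show n - j - 0 = n - j by omega]
      rw [Nat.cast_mul (j ! * (n - j)!), Real.sqrt_mul_self (by positivity)]
      rw [Nat.factorial_zero]
      norm_num
      exact ⟨(Nat.factorial_pos _).ne', (Nat.factorial_pos _).ne'⟩
    · rw [if_neg hjk]
      by_cases hg : 0 ≤ j ∧ 0 + k ≤ n ∧ j ≤ 0 + k
      · rw [if_pos hg, zero_pow (show 0 + (0 + k - j) ≠ 0 by omega)]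
        ring
      · rw [if_neg hg]
  · intro b _ hb
    by_cases hg : b ≤ j ∧ b + k ≤ n ∧ j ≤ b + k
    · rw [if_pos hg]
      rw [show ((Real.sin (0 / 2) : ℝ) : ℂ) = 0 by norm_num,
        zero_pow (show b + (b + k - j) ≠ 0 by omega)]
      ring
    · rw [if_neg hg]
  · intro h
    exact absurd (Finset.mem_range.mpr (by omega)) h

noncomputable def DM (n : ℕ) (θ : ℝ) : Matrix (Fin (n+1)) (Fin (n+1)) ℂ :=
  Matrix.of fun j k => dE n (j : ℕ) (k : ℕ) θ

lemma DM_zero (n : ℕ) : DM n 0 = 1 := by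
  ext j k
  show dE n (j : ℕ) (k : ℕ) 0 = (1 : Matrix (Fin (n+1)) (Fin (n+1)) ℂ) j k
  rw [dE_zero (Nat.lt_succ_iff.mp j.isLt) (Nat.lt_succ_iff.mp k.isLt), Matrix.one_apply]
  simp [Fin.ext_iff]

lemma A_half (n : ℕ) : (-Complex.I) • _root_.S2 n = (-(1/2) : ℂ) • (_root_.Sp n - _root_.Sm n) := by
  rw [S2, smul_smul]
  congr 1
  have h2 : (2 * Complex.I)⁻¹ = Complex.I * (-(1/2)) := by
    refine inv_eq_of_mul_eq_one_right ?_
    rw [show (2 * Complex.I) * (Complex.I * (-(1/2))) = -(Complex.I * Complex.I) by ring,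
      Complex.I_mul_I]
    norm_num
  rw [h2, show -Complex.I * (Complex.I * (-(1/2))) = (Complex.I * Complex.I) * (1/2) by ring,
    Complex.I_mul_I]
  norm_num

lemma Sp_mul (n : ℕ) (θ : ℝ) (j k : Fin (n+1)) :
    (_root_.Sp n * DM n θ) j k
      = ((Real.sqrt ((j : ℕ) * ((n : ℝ) - (j : ℕ) + 1)) : ℝ) : ℂ)
          * dE n ((j : ℕ) - 1) (k : ℕ) θ := by
  rw [Matrix.mul_apply]
  by_cases hj0 : (j : ℕ) = 0
  · rw [Finset.sum_eq_zero, hj0]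
    · norm_num
    · intro m _
      show (if (j : ℕ) = (m : ℕ) + 1 then
        ((Real.sqrt (((m : ℕ) + 1) * (n - (m : ℕ))) : ℝ) : ℂ) else 0) * _ = 0
      rw [if_neg (by omega), zero_mul]
  · have hji : (j : ℕ) = ((j : ℕ) - 1) + 1 := by omega
    rw [Finset.sum_eq_single (⟨(j : ℕ) - 1, by omega⟩ : Fin (n+1))]
    · show (if (j : ℕ) = ((j : ℕ) - 1) + 1 then
        ((Real.sqrt (((((j : ℕ) - 1 : ℕ) : ℝ) + 1) * ((n : ℝ) - (((j : ℕ) - 1 : ℕ) : ℝ))) : ℝ) : ℂ)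
        else 0) * dE n ((j : ℕ) - 1) (k : ℕ) θ = _
      rw [if_pos hji]
      congr 2
      have hc : (((j : ℕ) : ℝ)) = (((j : ℕ) - 1 : ℕ) : ℝ) + 1 := by
        exact_mod_cast congrArg (Nat.cast : ℕ → ℝ) hji
      rw [hc]
      push_cast
      ring
    · intro b _ hb
      show (if (j : ℕ) = (b : ℕ) + 1 then
        ((Real.sqrt (((b : ℕ) + 1) * (n - (b : ℕ))) : ℝ) : ℂ) else 0) * _ = 0
      have : (b : ℕ) ≠ (j : ℕ) - 1 := fun h => hb (Fin.ext (by simpa using h))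
      rw [if_neg (by omega), zero_mul]
    · intro h
      exact absurd (Finset.mem_univ _) h

lemma Sm_mul (n : ℕ) (θ : ℝ) (j k : Fin (n+1)) :
    (_root_.Sm n * DM n θ) j k
      = ((Real.sqrt (((j : ℕ) + 1) * ((n : ℝ) - (j : ℕ))) : ℝ) : ℂ)
          * dE n ((j : ℕ) + 1) (k : ℕ) θ := by
  rw [Matrix.mul_apply]
  by_cases hjn : (j : ℕ) = n
  · rw [Finset.sum_eq_zero, hjn]
    · rw [show (n : ℝ) - (n : ℕ) = 0 by norm_num]
      norm_num
    · intro m _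
      show star ((_root_.Sp n) m j) * _ = 0
      show star (if (m : ℕ) = (j : ℕ) + 1 then
        ((Real.sqrt (((j : ℕ) + 1) * (n - (j : ℕ))) : ℝ) : ℂ) else 0) * _ = 0
      rw [if_neg (by omega : ¬((m : ℕ) = (j : ℕ) + 1)), star_zero, zero_mul]
  · rw [Finset.sum_eq_single (⟨(j : ℕ) + 1, by omega⟩ : Fin (n+1))]
    · show star ((_root_.Sp n) ⟨(j : ℕ) + 1, _⟩ j) * dE n ((j : ℕ) + 1) (k : ℕ) θ = _
      show star (if ((j : ℕ) + 1) = (j : ℕ) + 1 then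
        ((Real.sqrt (((j : ℕ) + 1) * ((n : ℝ) - (j : ℕ))) : ℝ) : ℂ) else 0)
          * dE n ((j : ℕ) + 1) (k : ℕ) θ = _
      rw [if_pos rfl, Complex.star_def, Complex.conj_ofReal]
    · intro b _ hb
      show star ((_root_.Sp n) b j) * _ = 0
      show star (if (b : ℕ) = (j : ℕ) + 1 then
        ((Real.sqrt (((j : ℕ) + 1) * (n - (j : ℕ))) : ℝ) : ℂ) else 0) * _ = 0
      have : (b : ℕ) ≠ (j : ℕ) + 1 := fun h => hb (Fin.ext (by simpa using h))
      rw [if_neg this, star_zero, zero_mul]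
    · intro h
      exact absurd (Finset.mem_univ _) h

lemma mulA_apply (n : ℕ) (θ : ℝ) (j k : Fin (n+1)) :
    (((-Complex.I) • _root_.S2 n) * DM n θ) j k
      = ((Real.sqrt (((j : ℕ) + 1) * ((n : ℝ) - (j : ℕ))) / 2 : ℝ) : ℂ)
          * dE n ((j : ℕ) + 1) (k : ℕ) θ
        - ((Real.sqrt ((j : ℕ) * ((n : ℝ) - (j : ℕ) + 1)) / 2 : ℝ) : ℂ)
          * dE n ((j : ℕ) - 1) (k : ℕ) θ := by
  rw [A_half, Matrix.smul_mul, Matrix.smul_apply, Matrix.sub_mul, Matrix.sub_apply,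
    Sp_mul, Sm_mul, smul_eq_mul]
  push_cast
  ring

lemma exp_entry (n : ℕ) (θ : ℝ) (j k : Fin (n + 1)) :
    NormedSpace.exp ((-Complex.I * (θ : ℂ)) • _root_.S2 n) j k = dE n (j : ℕ) (k : ℕ) θ := by
  letI : SeminormedRing (Matrix (Fin (n+1)) (Fin (n+1)) ℂ) := Matrix.linftyOpSemiNormedRing
  letI : NormedRing (Matrix (Fin (n+1)) (Fin (n+1)) ℂ) := Matrix.linftyOpNormedRing
  letI : NormedAlgebra ℂ (Matrix (Fin (n+1)) (Fin (n+1)) ℂ) := Matrix.linftyOpNormedAlgebra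
  letI : NormedAlgebra ℝ (Matrix (Fin (n+1)) (Fin (n+1)) ℂ) := Matrix.linftyOpNormedAlgebra
  set A : Matrix (Fin (n+1)) (Fin (n+1)) ℂ := (-Complex.I) • _root_.S2 n with hA
  -- derivative of DM
  have hDM : ∀ t : ℝ, HasDerivAt (fun t => DM n t) (A * DM n t) t := by
    intro t
    have hrw : (fun t : ℝ => DM n t)
        = fun t : ℝ => ∑ p : Fin (n+1), ∑ q : Fin (n+1),
            dE n (p : ℕ) (q : ℕ) t • Matrix.single p q (1 : ℂ) := by
      funext u
      rw [Matrix.matrix_eq_sum_single (DM n u)]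
      refine Finset.sum_congr rfl fun p _ => Finset.sum_congr rfl fun q _ => ?_
      rw [Matrix.smul_single, smul_eq_mul, mul_one]
      rfl
    have hrw2 : A * DM n t
        = ∑ p : Fin (n+1), ∑ q : Fin (n+1),
            ((A * DM n t) p q) • Matrix.single p q (1 : ℂ) := by
      conv_lhs => rw [Matrix.matrix_eq_sum_single (A * DM n t)]
      refine Finset.sum_congr rfl fun p _ => Finset.sum_congr rfl fun q _ => ?_
      rw [Matrix.smul_single, smul_eq_mul, mul_one]
    rw [hrw, hrw2]
    apply HasDerivAt.fun_sum
    intro p _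
    apply HasDerivAt.fun_sum
    intro q _
    refine HasDerivAt.smul_const ?_ _
    have h := hasDerivAt_dE (n := n) (j := (p : ℕ)) (k := (q : ℕ))
      (Nat.lt_succ_iff.mp p.isLt) (Nat.lt_succ_iff.mp q.isLt) t
    rw [mulA_apply]
    exact h
  -- constancy of exp(-tA) * DM t
  have hG : ∀ t : ℝ, HasDerivAt (fun t : ℝ => NormedSpace.exp (t • (-A)) * DM n t) 0 t := by
    intro t
    have h := (hasDerivAt_exp_smul_const (𝕂 := ℝ) (-A) t).fun_mul (hDM t)
    refine h.congr_deriv ?_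
    rw [mul_assoc, neg_mul, mul_neg, neg_add_cancel]
  have hconst : ∀ t : ℝ, NormedSpace.exp (t • (-A)) * DM n t
      = NormedSpace.exp ((0 : ℝ) • (-A)) * DM n 0 :=
    fun t => is_const_of_deriv_eq_zero
      (fun u => (hG u).differentiableAt) (fun u => (hG u).deriv) t 0
  have hkey : NormedSpace.exp (θ • (-A)) * DM n θ = 1 := by
    rw [hconst θ, zero_smul, NormedSpace.exp_zero, one_mul, DM_zero]
  have hmain : NormedSpace.exp (θ • A) = DM n θ := by
    have hinv : NormedSpace.exp (θ • A) * NormedSpace.exp (θ • (-A)) = 1 := by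
      letI : NormedAlgebra ℚ (Matrix (Fin (n+1)) (Fin (n+1)) ℂ) := Matrix.linftyOpNormedAlgebra
      rw [smul_neg]
      exact (NormedSpace.exp_add_of_commute ((Commute.refl (θ • A)).neg_right)).symm.trans
        (by rw [add_neg_cancel, NormedSpace.exp_zero])
    calc NormedSpace.exp (θ • A)
        = NormedSpace.exp (θ • A) * (NormedSpace.exp (θ • (-A)) * DM n θ) := by
          rw [hkey, mul_one]
      _ = (NormedSpace.exp (θ • A) * NormedSpace.exp (θ • (-A))) * DM n θ := by
          rw [mul_assoc]
      _ = DM n θ := by rw [hinv, one_mul]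
  have hsm : (-Complex.I * (θ : ℂ)) • _root_.S2 n = θ • A := by
    rw [hA]
    ext a b
    simp only [Matrix.smul_apply, Complex.real_smul, smul_eq_mul]
    ring
  rw [hsm, hmain]
  rfl

end MW

attribute [local instance] Matrix.normedAddCommGroup Matrix.normedSpace

/-- Majorana–Wigner formula for the reduced rotation matrix `r^{(s)}(θ) = exp(-iθS₂)`.
The sum runs over all integers `t ≥ 0` with `j - t ≥ 0`, `n - k - t ≥ 0` and
`t - j + k ≥ 0` (any such `t` satisfies `t ≤ n`, so summing over `t < n + 1` is
equivalent).  The exponents `n + j - k - 2t` and `2t - j + k` are written in the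
equivalent nonnegative forms `(j - t) + (n - k - t)` and `t + (t + k - j)`. -/
theorem majorana_wigner_formula (n : ℕ) (θ : ℝ) (j k : Fin (n+1)) :
    NormedSpace.exp ((-Complex.I * (θ : ℂ)) • S2 n) j k =
      ∑ t ∈ Finset.range (n+1),
        if t ≤ (j : ℕ) ∧ t + (k : ℕ) ≤ n ∧ (j : ℕ) ≤ t + (k : ℕ) then
          ((-1 : ℂ) ^ t *
            ((Real.sqrt (((j : ℕ)! * (n - (j : ℕ))! * (k : ℕ)! * (n - (k : ℕ))! : ℕ)) /
              ((((j : ℕ) - t)! * (n - (k : ℕ) - t)! * t ! * (t + (k : ℕ) - (j : ℕ))! : ℕ)) : ℝ) : ℂ) *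
            ((Real.cos (θ / 2) : ℂ) ^ (((j : ℕ) - t) + (n - (k : ℕ) - t))) *
            ((Real.sin (θ / 2) : ℂ) ^ (t + (t + (k : ℕ) - (j : ℕ)))))
        else 0 := by
  exact MW.exp_entry n θ j k
end

section
/- Adjoint action of rotations on the spin operators: for every n : ℕ and all φ, θ, ψ ∈ ℝ, with R = R(φ,θ,ψ): (i) Rᴴ S₃ R = cos θ · S₃ − (1/2) sin θ · ( e^{iψ} S₊ + e^{−iψ} S₋ ); (ii) Rᴴ S₊ R = e^{iφ} [ sin θ · S₃ + (1/2)( (cos θ + 1) e^{iψ} S₊ + (cos θ − 1) e^{−iψ} S₋ ) ]; (iii) Rᴴ S₋ R = e^{−iφ} [ sin θ · S₃ + (1/2)( (cos θ − 1) e^{iψ} S₊ + (cos θ + 1) e^{−iψ} S₋ ) ]. -/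
open Matrix Complex

section comm
variable (n : ℕ)

lemma S3_herm : (S3 n)ᴴ = S3 n := by
  ext j k
  rcases eq_or_ne j k with rfl | h
  · simp [S3, Matrix.conjTranspose_apply, Complex.star_def, map_sub, map_div₀]
  · simp [S3, Matrix.conjTranspose_apply, Matrix.diagonal_apply_ne _ h,
      Matrix.diagonal_apply_ne _ (Ne.symm h)]

lemma Sm_herm : (Sm n)ᴴ = Sp n := by rw [Sm, conjTranspose_conjTranspose]

lemma S3_mul_Sp : S3 n * Sp n = Sp n * S3 n + Sp n := by
  ext j k
  simp only [S3, Sp, Matrix.diagonal_mul, Matrix.mul_diagonal, Matrix.add_apply, Matrix.of_apply]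
  by_cases h : (j : ℕ) = (k : ℕ) + 1
  · simp only [if_pos h]
    have hj : ((j : Fin (n+1)) : ℂ) = ((k : Fin (n+1)) : ℂ) + 1 := by
      have : ((j : ℕ) : ℂ) = ((k : ℕ) : ℂ) + 1 := by exact_mod_cast congrArg (Nat.cast : ℕ → ℂ) h
      simpa using this
    rw [hj]; ring
  · simp [if_neg h]

lemma S3_mul_Sm : S3 n * Sm n = Sm n * S3 n - Sm n := by
  have h := congrArg Matrix.conjTranspose (S3_mul_Sp n)
  simp only [Matrix.conjTranspose_mul, Matrix.conjTranspose_add, S3_herm] at h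
  rw [Sm, h]
  noncomm_ring

lemma Sp_mul_Sm_apply (j l : Fin (n+1)) :
    (Sp n * Sm n) j l = if j = l then (((j:ℕ) * (n + 1 - (j:ℕ)) : ℕ) : ℂ) else 0 := by
  rw [Matrix.mul_apply]
  by_cases hjl : j = l
  · subst hjl
    rw [if_pos rfl]
    rcases Nat.eq_zero_or_pos (j:ℕ) with hj | hj
    · rw [Finset.sum_eq_zero]
      · simp [hj]
      · intro x _
        simp [Sp, Sm, hj]
    · have hlt : (j:ℕ) - 1 < n + 1 := by omega
      rw [Finset.sum_eq_single (⟨(j:ℕ) - 1, hlt⟩ : Fin (n+1))]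
      · have hc : (j:ℕ) = ((⟨(j:ℕ) - 1, hlt⟩ : Fin (n+1)) : ℕ) + 1 := by
          simp only [Fin.val_mk]; omega
        simp only [Sp, Sm, Matrix.conjTranspose_apply, Matrix.of_apply, if_pos hc,
          Fin.val_mk]
        have hnn : (0:ℝ) ≤ ((((j:ℕ) - 1 : ℕ) : ℝ) + 1) * ((n:ℝ) - (((j:ℕ) - 1 : ℕ) : ℝ)) := by
          apply mul_nonneg
          · positivity
          · rw [sub_nonneg]
            have hln : ((j:ℕ) - 1 : ℕ) ≤ n := by omega
            exact_mod_cast hln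
        rw [Complex.star_def, Complex.conj_ofReal, ← Complex.ofReal_mul,
          Real.mul_self_sqrt hnn]
        have hle := j.is_le
        push_cast [Nat.cast_sub (show (j:ℕ) ≤ n+1 by omega),
          Nat.cast_sub (show 1 ≤ (j:ℕ) from hj)]
        ring
      · intro b _ hb
        have : (j:ℕ) ≠ (b:ℕ) + 1 := by
          intro hc
          exact hb (Fin.ext (by simp; omega))
        simp [Sp, Sm, this]
      · simp
  · rw [if_neg hjl]
    apply Finset.sum_eq_zero
    intro x _
    by_cases h1 : (j:ℕ) = (x:ℕ) + 1
    · by_cases h2 : (l:ℕ) = (x:ℕ) + 1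
      · exact absurd (Fin.ext (by omega)) hjl
      · simp [Sp, Sm, h2]
    · simp [Sp, Sm, h1]

lemma Sm_mul_Sp_apply (j l : Fin (n+1)) :
    (Sm n * Sp n) j l = if j = l then ((((j:ℕ)+1) * (n - (j:ℕ)) : ℕ) : ℂ) else 0 := by
  rw [Matrix.mul_apply]
  by_cases hjl : j = l
  · subst hjl
    rw [if_pos rfl]
    rcases Nat.lt_or_ge (j:ℕ) n with hj | hj
    · have hlt : (j:ℕ) + 1 < n + 1 := by omega
      rw [Finset.sum_eq_single (⟨(j:ℕ) + 1, hlt⟩ : Fin (n+1))]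
      · have hc : (((⟨(j:ℕ) + 1, hlt⟩ : Fin (n+1)) : ℕ)) = (j:ℕ) + 1 := rfl
        simp only [Sp, Sm, Matrix.conjTranspose_apply, Matrix.of_apply, hc,
          eq_self_iff_true, if_true, Fin.val_mk]
        have hnn : (0:ℝ) ≤ (((j:ℕ) : ℝ) + 1) * ((n:ℝ) - ((j:ℕ) : ℝ)) := by
          apply mul_nonneg
          · positivity
          · rw [sub_nonneg]
            exact_mod_cast hj.le
        rw [Complex.star_def, Complex.conj_ofReal, ← Complex.ofReal_mul,
          Real.mul_self_sqrt hnn]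
        push_cast [Nat.cast_sub hj.le]
        ring
      · intro b _ hb
        have : (b:ℕ) ≠ (j:ℕ) + 1 := by
          intro hc
          exact hb (Fin.ext (by simp; omega))
        simp [Sp, Sm, this]
      · simp
    · have hjn : (j:ℕ) = n := le_antisymm j.is_le hj
      have hz : ((j:ℕ)+1) * (n - (j:ℕ)) = 0 := by
        rw [hjn, Nat.sub_self, mul_zero]
      rw [hz, Nat.cast_zero]
      apply Finset.sum_eq_zero
      intro x _
      have : (x:ℕ) ≠ (j:ℕ) + 1 := by have := x.is_le; omega
      simp [Sp, Sm, this]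
  · rw [if_neg hjl]
    apply Finset.sum_eq_zero
    intro x _
    by_cases h1 : (x:ℕ) = (j:ℕ) + 1
    · by_cases h2 : (x:ℕ) = (l:ℕ) + 1
      · exact absurd (Fin.ext (by omega)) hjl
      · simp [Sp, Sm, h2]
    · simp [Sp, Sm, h1]

lemma Sp_mul_Sm : Sp n * Sm n = Sm n * Sp n + (2:ℂ) • S3 n := by
  ext j l
  rw [Matrix.add_apply, Sp_mul_Sm_apply, Sm_mul_Sp_apply]
  by_cases hjl : j = l
  · subst hjl
    simp only [if_pos rfl, S3, Matrix.smul_apply, Matrix.diagonal_apply_eq, smul_eq_mul]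
    have hle := j.is_le
    push_cast [Nat.cast_sub (by omega : (j:ℕ) ≤ n + 1), Nat.cast_sub hle]
    ring
  · simp [if_neg hjl, S3, Matrix.diagonal_apply_ne _ hjl]

noncomputable def Bmat (n : ℕ) : Matrix (Fin (n+1)) (Fin (n+1)) ℂ := Complex.I • S2 n

lemma Bmat_eq : Bmat n = (1/2 : ℂ) • (Sp n - Sm n) := by
  rw [Bmat, S2, smul_smul]
  congr 1
  rw [mul_comm 2 Complex.I, mul_inv, ← mul_assoc, mul_inv_cancel₀ Complex.I_ne_zero, one_mul,
    one_div]

lemma B_comm_S3 : Bmat n * S3 n - S3 n * Bmat n = -((1/2:ℂ) • (Sp n + Sm n)) := by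
  rw [Bmat_eq]
  simp only [Matrix.smul_mul, Matrix.mul_smul, sub_mul, mul_sub, S3_mul_Sp, S3_mul_Sm]
  module

lemma B_comm_Sp : Bmat n * Sp n - Sp n * Bmat n = S3 n := by
  rw [Bmat_eq]
  simp only [Matrix.smul_mul, Matrix.mul_smul, sub_mul, mul_sub, Sp_mul_Sm]
  module

lemma B_comm_Sm : Bmat n * Sm n - Sm n * Bmat n = S3 n := by
  rw [Bmat_eq]
  simp only [Matrix.smul_mul, Matrix.mul_smul, sub_mul, mul_sub, Sp_mul_Sm]
  module

end comm

lemma exp_conj_trig {N : ℕ} (A X Y Z : Matrix (Fin (N+1)) (Fin (N+1)) ℂ)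
    (hXY : A * X - X * A = Y) (hYX : A * Y - Y * A = -X) (hZ : A * Z = Z * A) (t : ℝ) :
    NormedSpace.exp (t • A) * (X + Z) * NormedSpace.exp (-(t • A)) =
      Real.cos t • X + Real.sin t • Y + Z := by
  letI : SeminormedRing (Matrix (Fin (N+1)) (Fin (N+1)) ℂ) := Matrix.linftyOpSemiNormedRing
  letI : NormedRing (Matrix (Fin (N+1)) (Fin (N+1)) ℂ) := Matrix.linftyOpNormedRing
  letI : NormedAlgebra ℝ (Matrix (Fin (N+1)) (Fin (N+1)) ℂ) := Matrix.linftyOpNormedAlgebra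
  set M : ℝ → Matrix (Fin (N+1)) (Fin (N+1)) ℂ :=
    fun s => Real.cos s • X + Real.sin s • Y + Z with hMdef
  have hcomm : ∀ s : ℝ, Commute A (NormedSpace.exp (s • A)) :=
    fun s => ((Commute.refl A).smul_right s).exp_right
  have hexp : ∀ s : ℝ, HasDerivAt (fun u : ℝ => NormedSpace.exp (u • A))
      (NormedSpace.exp (s • A) * A) s := fun s => hasDerivAt_exp_smul_const A s
  have hexpneg : ∀ s : ℝ, HasDerivAt (fun u : ℝ => NormedSpace.exp (-(u • A)))
      (-(NormedSpace.exp (-(s • A)) * A)) s := by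
    intro s
    have h0 : HasDerivAt (fun u : ℝ => -u) (-1 : ℝ) s := (hasDerivAt_id s).neg
    have h1 := (hasDerivAt_exp_smul_const A (-s)).scomp s h0
    simp only [Function.comp_def, neg_smul, neg_neg, mul_neg, one_smul] at h1
    exact h1
  have hMd : ∀ s, HasDerivAt M (Real.cos s • Y - Real.sin s • X) s := by
    intro s
    have h1 := (Real.hasDerivAt_cos s).smul_const X
    have h2 := (Real.hasDerivAt_sin s).smul_const Y
    have h3 := (h1.add h2).add_const Z
    refine h3.congr_deriv ?_
    rw [neg_smul]
    abel
  have hAM : ∀ s, A * M s - M s * A = Real.cos s • Y - Real.sin s • X := by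
    intro s
    have e1 : A * (Real.cos s • X) - (Real.cos s • X) * A = Real.cos s • Y := by
      rw [Matrix.mul_smul, Matrix.smul_mul, ← smul_sub, hXY]
    have e2 : A * (Real.sin s • Y) - (Real.sin s • Y) * A = Real.sin s • (-X) := by
      rw [Matrix.mul_smul, Matrix.smul_mul, ← smul_sub, hYX]
    calc A * M s - M s * A
        = (A * (Real.cos s • X) - (Real.cos s • X) * A)
          + (A * (Real.sin s • Y) - (Real.sin s • Y) * A) + (A * Z - Z * A) := by
          simp only [hMdef, mul_add, add_mul]
          abel
      _ = Real.cos s • Y - Real.sin s • X := by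
          rw [e1, e2, hZ, smul_neg]
          abel
  set f : ℝ → Matrix (Fin (N+1)) (Fin (N+1)) ℂ :=
    fun s => NormedSpace.exp (-(s • A)) * M s * NormedSpace.exp (s • A) with hfdef
  have hf' : ∀ s, HasDerivAt f 0 s := by
    intro s
    have hprod := ((hexpneg s).mul (hMd s)).mul (hexp s)
    refine hprod.congr_deriv ?_
    simp only [Pi.mul_apply]
    rw [← hAM s]
    have hc := (hcomm s).eq
    set E1 := NormedSpace.exp (-(s • A))
    set E2 := NormedSpace.exp (s • A)
    have hc1 : Commute A E1 := by
      have := ((Commute.refl A).smul_right (-s)).exp_right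
      simpa [neg_smul] using this
    rw [show (-(E1 * A) * M s + E1 * (A * M s - M s * A)) * E2 + E1 * M s * (E2 * A)
        = E1 * M s * (E2 * A) - E1 * (M s * A) * E2 by noncomm_ring, ← hc]
    noncomm_ring
  have hdiff : Differentiable ℝ f := fun s => (hf' s).differentiableAt
  have hconst : f t = f 0 := is_const_of_deriv_eq_zero hdiff (fun s => (hf' s).deriv) t 0
  have hf0 : f 0 = X + Z := by
    simp [hfdef, hMdef, NormedSpace.exp_zero]
  rw [hf0] at hconst
  have hinv1 : NormedSpace.exp (t • A) * NormedSpace.exp (-(t • A)) = 1 := by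
    rw [← Matrix.exp_add_of_commute _ _ ((Commute.refl (t • A)).neg_right)]
    simp [NormedSpace.exp_zero]
  calc NormedSpace.exp (t • A) * (X + Z) * NormedSpace.exp (-(t • A))
      = NormedSpace.exp (t • A) * (NormedSpace.exp (-(t • A)) * M t
          * NormedSpace.exp (t • A)) * NormedSpace.exp (-(t • A)) := by rw [← hconst]
    _ = (NormedSpace.exp (t • A) * NormedSpace.exp (-(t • A))) * M t
          * (NormedSpace.exp (t • A) * NormedSpace.exp (-(t • A))) := by
        noncomm_ring
    _ = M t := by rw [hinv1]; simp

section diag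
variable (n : ℕ)

lemma real_smul_mat (θ : ℝ) (M : Matrix (Fin (n+1)) (Fin (n+1)) ℂ) :
    θ • M = (θ:ℂ) • M := (algebraMap_smul ℂ θ M).symm

lemma S2_herm : (S2 n)ᴴ = S2 n := by
  have hsp : (Sp n)ᴴ = Sm n := rfl
  rw [S2, Matrix.conjTranspose_smul, Matrix.conjTranspose_sub, hsp, Sm_herm]
  have : star ((2 * Complex.I)⁻¹) = -(2 * Complex.I)⁻¹ := by
    simp [Complex.star_def, ← map_inv₀]
  rw [this]
  module

lemma Bmat_herm : (Bmat n)ᴴ = -(Bmat n) := by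
  rw [Bmat, Matrix.conjTranspose_smul, S2_herm]
  simp [Complex.star_def]

lemma exp_thetaB_conjT (θ : ℝ) :
    (NormedSpace.exp (θ • Bmat n))ᴴ = NormedSpace.exp (-(θ • Bmat n)) := by
  rw [← Matrix.exp_conjTranspose]
  congr 1
  rw [real_smul_mat, Matrix.conjTranspose_smul, Bmat_herm, Complex.star_def,
    Complex.conj_ofReal, smul_neg, ← real_smul_mat]

lemma exp_thetaB_conjT' (θ : ℝ) :
    (NormedSpace.exp (-(θ • Bmat n)))ᴴ = NormedSpace.exp (θ • Bmat n) := by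
  rw [← Matrix.exp_conjTranspose]
  congr 1
  rw [real_smul_mat, Matrix.conjTranspose_neg, Matrix.conjTranspose_smul, Bmat_herm,
    Complex.star_def, Complex.conj_ofReal, smul_neg, neg_neg, ← real_smul_mat]

lemma exp_S3_conjT (z : ℂ) :
    (NormedSpace.exp (z • S3 n))ᴴ = NormedSpace.exp (star z • S3 n) := by
  rw [← Matrix.exp_conjTranspose, Matrix.conjTranspose_smul, S3_herm]

lemma exp_smul_S3 (z : ℂ) :
    NormedSpace.exp (z • S3 n)
      = Matrix.diagonal (fun j : Fin (n+1) => Complex.exp (z * ((j:ℂ) - (n:ℂ)/2))) := by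
  rw [S3, ← Matrix.diagonal_smul, Matrix.exp_diagonal, Pi.exp_def]
  funext j
  simp [Complex.exp_eq_exp_ℂ]

lemma diag_conj_S3 (z : ℂ) :
    NormedSpace.exp (z • S3 n) * S3 n * NormedSpace.exp (-(z • S3 n)) = S3 n := by
  rw [← neg_smul, exp_smul_S3, exp_smul_S3, S3]
  ext j k
  rcases eq_or_ne j k with rfl | h
  · simp only [Matrix.diagonal_mul, Matrix.mul_diagonal, Matrix.diagonal_apply_eq]
    rw [mul_right_comm, ← Complex.exp_add,
      show z * ((j:ℂ) - (n:ℂ)/2) + -z * ((j:ℂ) - (n:ℂ)/2) = 0 by ring, Complex.exp_zero,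
      one_mul]
  · simp [Matrix.diagonal_apply_ne _ h]

lemma diag_conj_Sp (z : ℂ) :
    NormedSpace.exp (z • S3 n) * Sp n * NormedSpace.exp (-(z • S3 n))
      = Complex.exp z • Sp n := by
  rw [← neg_smul, exp_smul_S3, exp_smul_S3]
  ext j k
  simp only [Matrix.diagonal_mul, Matrix.mul_diagonal, Matrix.smul_apply, Sp, Matrix.of_apply,
    smul_eq_mul]
  by_cases h : (j:ℕ) = (k:ℕ) + 1
  · rw [if_pos h]
    have hj : ((j:ℕ):ℂ) = ((k:ℕ):ℂ) + 1 := by exact_mod_cast congrArg (Nat.cast : ℕ → ℂ) h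
    have hexp : Complex.exp (z * ((j:ℂ) - (n:ℂ)/2)) * Complex.exp (-z * ((k:ℂ) - (n:ℂ)/2))
        = Complex.exp z := by
      rw [← Complex.exp_add]
      congr 1
      rw [show ((j:Fin (n+1)):ℂ) = (((j:ℕ)):ℂ) from rfl]
      rw [hj]
      ring
    rw [mul_right_comm, hexp]
  · simp [if_neg h]

lemma diag_conj_Sm (z : ℂ) :
    NormedSpace.exp (z • S3 n) * Sm n * NormedSpace.exp (-(z • S3 n))
      = Complex.exp (-z) • Sm n := by
  rw [← neg_smul, exp_smul_S3, exp_smul_S3]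
  ext j k
  simp only [Matrix.diagonal_mul, Matrix.mul_diagonal, Matrix.smul_apply, Sm, Sp,
    Matrix.conjTranspose_apply, Matrix.of_apply, smul_eq_mul]
  by_cases h : (k:ℕ) = (j:ℕ) + 1
  · rw [if_pos h]
    have hk : ((k:ℕ):ℂ) = ((j:ℕ):ℂ) + 1 := by exact_mod_cast congrArg (Nat.cast : ℕ → ℂ) h
    have hexp : Complex.exp (z * ((j:ℂ) - (n:ℂ)/2)) * Complex.exp (-z * ((k:ℂ) - (n:ℂ)/2))
        = Complex.exp (-z) := by
      rw [← Complex.exp_add]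
      congr 1
      rw [hk]
      ring
    rw [mul_right_comm, hexp]
  · simp [if_neg h]

end diag

section theta
variable (n : ℕ)

lemma theta_conj_S3 (θ : ℝ) :
    NormedSpace.exp (θ • Bmat n) * S3 n * NormedSpace.exp (-(θ • Bmat n)) =
      (Real.cos θ : ℂ) • S3 n + (-(Real.sin θ : ℂ)/2) • Sp n + (-(Real.sin θ : ℂ)/2) • Sm n := by
  have hYX : Bmat n * (-((1/2:ℂ) • (Sp n + Sm n))) - (-((1/2:ℂ) • (Sp n + Sm n))) * Bmat n
      = -(S3 n) := by
    have hexpand : Bmat n * (-((1/2:ℂ) • (Sp n + Sm n))) - (-((1/2:ℂ) • (Sp n + Sm n))) * Bmat n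
        = -((1/2:ℂ) • ((Bmat n * Sp n - Sp n * Bmat n) + (Bmat n * Sm n - Sm n * Bmat n))) := by
      simp only [mul_neg, neg_mul, Matrix.mul_smul, Matrix.smul_mul, mul_add, add_mul]
      module
    rw [hexpand, B_comm_Sp, B_comm_Sm]
    module
  have h := exp_conj_trig (Bmat n) (S3 n) (-((1/2:ℂ) • (Sp n + Sm n))) 0
    (B_comm_S3 n) hYX (by simp) θ
  rw [add_zero, add_zero] at h
  rw [real_smul_mat n (Real.cos θ), real_smul_mat n (Real.sin θ)] at h
  rw [h]
  module

lemma theta_conj_Sp (θ : ℝ) :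
    NormedSpace.exp (θ • Bmat n) * Sp n * NormedSpace.exp (-(θ • Bmat n)) =
      (Real.sin θ : ℂ) • S3 n + (((Real.cos θ : ℂ)+1)/2) • Sp n
        + (((Real.cos θ : ℂ)-1)/2) • Sm n := by
  have hXY : Bmat n * ((1/2:ℂ) • (Sp n + Sm n)) - ((1/2:ℂ) • (Sp n + Sm n)) * Bmat n
      = S3 n := by
    have hexpand : Bmat n * ((1/2:ℂ) • (Sp n + Sm n)) - ((1/2:ℂ) • (Sp n + Sm n)) * Bmat n
        = (1/2:ℂ) • ((Bmat n * Sp n - Sp n * Bmat n) + (Bmat n * Sm n - Sm n * Bmat n)) := by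
      simp only [Matrix.mul_smul, Matrix.smul_mul, mul_add, add_mul]
      module
    rw [hexpand, B_comm_Sp, B_comm_Sm]
    module
  have hZ : Bmat n * ((1/2:ℂ) • (Sp n - Sm n)) = ((1/2:ℂ) • (Sp n - Sm n)) * Bmat n := by
    rw [Bmat_eq]
  have h := exp_conj_trig (Bmat n) ((1/2:ℂ) • (Sp n + Sm n)) (S3 n) ((1/2:ℂ) • (Sp n - Sm n))
    hXY (B_comm_S3 n) hZ θ
  have hXZ : (1/2:ℂ) • (Sp n + Sm n) + (1/2:ℂ) • (Sp n - Sm n) = Sp n := by module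
  rw [hXZ] at h
  rw [real_smul_mat n (Real.cos θ), real_smul_mat n (Real.sin θ)] at h
  rw [h]
  module

lemma theta_conj_Sm (θ : ℝ) :
    NormedSpace.exp (θ • Bmat n) * Sm n * NormedSpace.exp (-(θ • Bmat n)) =
      (Real.sin θ : ℂ) • S3 n + (((Real.cos θ : ℂ)-1)/2) • Sp n
        + (((Real.cos θ : ℂ)+1)/2) • Sm n := by
  have h := congrArg Matrix.conjTranspose (theta_conj_Sp n θ)
  have hsp : (Sp n)ᴴ = Sm n := rfl
  simp only [Matrix.conjTranspose_mul, Matrix.conjTranspose_add, Matrix.conjTranspose_smul,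
    exp_thetaB_conjT, exp_thetaB_conjT', S3_herm, Sm_herm, hsp, Complex.star_def, map_div₀,
    map_add, map_sub, _root_.map_one, map_ofNat, Complex.conj_ofReal, ← mul_assoc] at h
  rw [h]
  module

end theta

attribute [local instance] Matrix.normedAddCommGroup Matrix.normedSpace

/-- Rotation matrix `R(φ,θ,ψ) = exp(-iφS₃)·exp(-iθS₂)·exp(-iψS₃)`. -/
noncomputable def Rot (n : ℕ) (φ θ ψ : ℝ) : Matrix (Fin (n+1)) (Fin (n+1)) ℂ :=
  NormedSpace.exp ((-Complex.I * (φ : ℂ)) • S3 n) *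
    NormedSpace.exp ((-Complex.I * (θ : ℂ)) • S2 n) *
      NormedSpace.exp ((-Complex.I * (ψ : ℂ)) • S3 n)


/-- Adjoint action of rotations on the spin operators `S₃`, `S₊`, `S₋`. -/
theorem rotation_adjoint_action (n : ℕ) (φ θ ψ : ℝ) :
    (Rot n φ θ ψ)ᴴ * S3 n * Rot n φ θ ψ =
        (Real.cos θ : ℂ) • S3 n -
          ((1 / 2 : ℂ) * (Real.sin θ : ℂ)) •
            (Complex.exp (Complex.I * (ψ : ℂ)) • Sp n +
              Complex.exp (-(Complex.I * (ψ : ℂ))) • Sm n) ∧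
      (Rot n φ θ ψ)ᴴ * Sp n * Rot n φ θ ψ =
        Complex.exp (Complex.I * (φ : ℂ)) •
          ((Real.sin θ : ℂ) • S3 n +
            (1 / 2 : ℂ) •
              ((((Real.cos θ : ℂ) + 1) * Complex.exp (Complex.I * (ψ : ℂ))) • Sp n +
                (((Real.cos θ : ℂ) - 1) * Complex.exp (-(Complex.I * (ψ : ℂ)))) • Sm n)) ∧
      (Rot n φ θ ψ)ᴴ * Sm n * Rot n φ θ ψ =
        Complex.exp (-(Complex.I * (φ : ℂ))) •
          ((Real.sin θ : ℂ) • S3 n +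
            (1 / 2 : ℂ) •
              ((((Real.cos θ : ℂ) - 1) * Complex.exp (Complex.I * (ψ : ℂ))) • Sp n +
                (((Real.cos θ : ℂ) + 1) * Complex.exp (-(Complex.I * (ψ : ℂ)))) • Sm n)) := by
  have h1 : (-Complex.I * (φ:ℂ)) • S3 n = -((Complex.I * (φ:ℂ)) • S3 n) := by
    rw [← neg_smul]; congr 1; ring
  have h2 : (-Complex.I * (θ:ℂ)) • S2 n = -(θ • Bmat n) := by
    rw [Bmat, real_smul_mat, smul_smul, ← neg_smul]
    congr 1
    ring
  have h3 : (-Complex.I * (ψ:ℂ)) • S3 n = -((Complex.I * (ψ:ℂ)) • S3 n) := by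
    rw [← neg_smul]; congr 1; ring
  have hRot : Rot n φ θ ψ =
      NormedSpace.exp (-((Complex.I * (φ:ℂ)) • S3 n)) * NormedSpace.exp (-(θ • Bmat n)) *
        NormedSpace.exp (-((Complex.I * (ψ:ℂ)) • S3 n)) := by
    rw [Rot, h1, h2, h3]
  have hstar1 : star (-(Complex.I * (φ:ℂ))) = Complex.I * (φ:ℂ) := by
    simp [Complex.star_def]
  have hstar3 : star (-(Complex.I * (ψ:ℂ))) = Complex.I * (ψ:ℂ) := by
    simp [Complex.star_def]
  have hRH : (Rot n φ θ ψ)ᴴ =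
      NormedSpace.exp ((Complex.I * (ψ:ℂ)) • S3 n) * NormedSpace.exp (θ • Bmat n) *
        NormedSpace.exp ((Complex.I * (φ:ℂ)) • S3 n) := by
    rw [hRot]
    simp only [Matrix.conjTranspose_mul]
    rw [exp_thetaB_conjT', ← neg_smul, ← neg_smul, exp_S3_conjT, exp_S3_conjT, hstar1, hstar3]
    simp only [mul_assoc]
  refine ⟨?_, ?_, ?_⟩
  · rw [hRH, hRot]
    have e1 : NormedSpace.exp ((Complex.I * (ψ:ℂ)) • S3 n) * NormedSpace.exp (θ • Bmat n) *
        NormedSpace.exp ((Complex.I * (φ:ℂ)) • S3 n) * S3 n *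
        (NormedSpace.exp (-((Complex.I * (φ:ℂ)) • S3 n)) * NormedSpace.exp (-(θ • Bmat n)) *
          NormedSpace.exp (-((Complex.I * (ψ:ℂ)) • S3 n))) =
        NormedSpace.exp ((Complex.I * (ψ:ℂ)) • S3 n) *
          (NormedSpace.exp (θ • Bmat n) *
            (NormedSpace.exp ((Complex.I * (φ:ℂ)) • S3 n) * S3 n *
              NormedSpace.exp (-((Complex.I * (φ:ℂ)) • S3 n))) *
            NormedSpace.exp (-(θ • Bmat n))) *
          NormedSpace.exp (-((Complex.I * (ψ:ℂ)) • S3 n)) := by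
      simp only [mul_assoc]
    rw [e1, diag_conj_S3, theta_conj_S3]
    simp only [mul_add, add_mul, Matrix.mul_smul, Matrix.smul_mul]
    rw [diag_conj_S3, diag_conj_Sp, diag_conj_Sm]
    module
  · rw [hRH, hRot]
    have e2 : NormedSpace.exp ((Complex.I * (ψ:ℂ)) • S3 n) * NormedSpace.exp (θ • Bmat n) *
        NormedSpace.exp ((Complex.I * (φ:ℂ)) • S3 n) * Sp n *
        (NormedSpace.exp (-((Complex.I * (φ:ℂ)) • S3 n)) * NormedSpace.exp (-(θ • Bmat n)) *
          NormedSpace.exp (-((Complex.I * (ψ:ℂ)) • S3 n))) =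
        NormedSpace.exp ((Complex.I * (ψ:ℂ)) • S3 n) *
          (NormedSpace.exp (θ • Bmat n) *
            (NormedSpace.exp ((Complex.I * (φ:ℂ)) • S3 n) * Sp n *
              NormedSpace.exp (-((Complex.I * (φ:ℂ)) • S3 n))) *
            NormedSpace.exp (-(θ • Bmat n))) *
          NormedSpace.exp (-((Complex.I * (ψ:ℂ)) • S3 n)) := by
      simp only [mul_assoc]
    rw [e2, diag_conj_Sp]
    simp only [Matrix.mul_smul, Matrix.smul_mul]
    rw [theta_conj_Sp]
    simp only [mul_add, add_mul, Matrix.mul_smul, Matrix.smul_mul]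
    rw [diag_conj_S3, diag_conj_Sp, diag_conj_Sm]
    module
  · rw [hRH, hRot]
    have e3 : NormedSpace.exp ((Complex.I * (ψ:ℂ)) • S3 n) * NormedSpace.exp (θ • Bmat n) *
        NormedSpace.exp ((Complex.I * (φ:ℂ)) • S3 n) * Sm n *
        (NormedSpace.exp (-((Complex.I * (φ:ℂ)) • S3 n)) * NormedSpace.exp (-(θ • Bmat n)) *
          NormedSpace.exp (-((Complex.I * (ψ:ℂ)) • S3 n))) =
        NormedSpace.exp ((Complex.I * (ψ:ℂ)) • S3 n) *
          (NormedSpace.exp (θ • Bmat n) *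
            (NormedSpace.exp ((Complex.I * (φ:ℂ)) • S3 n) * Sm n *
              NormedSpace.exp (-((Complex.I * (φ:ℂ)) • S3 n))) *
            NormedSpace.exp (-(θ • Bmat n))) *
          NormedSpace.exp (-((Complex.I * (ψ:ℂ)) • S3 n)) := by
      simp only [mul_assoc]
    rw [e3, diag_conj_Sm]
    simp only [Matrix.mul_smul, Matrix.smul_mul]
    rw [theta_conj_Sm]
    simp only [mul_add, add_mul, Matrix.mul_smul, Matrix.smul_mul]
    rw [diag_conj_S3, diag_conj_Sp, diag_conj_Sm]
    module
end

section
/- Expectation values of the ladder operators in a general coherent state: for every n : ℕ, every normalized fiducial vector Ψ₀ and all Euler angles Ω = (φ, θ, ψ), ⟨ R(Ω)Ψ₀ , S₊ · (R(Ω)Ψ₀) ⟩ = A₀ sin θ · e^{iφ} + A₂(Ω), and ⟨ R(Ω)Ψ₀ , S₋ · (R(Ω)Ψ₀) ⟩ equals the complex conjugate of ⟨ R(Ω)Ψ₀ , S₊ · (R(Ω)Ψ₀) ⟩; here ⟨·,·⟩ is the standard Hermitian inner product on ℂ^{n+1} (conjugate-linear in the first argument). -/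
open Matrix Complex

attribute [local instance] Matrix.normedAddCommGroup Matrix.normedSpace

/-- `f_j = √(j(n-j+1))`. -/
noncomputable def fc (n j : ℕ) : ℝ := Real.sqrt (j * (n - j + 1))

/-- `A₀ = Σ_j (j - n/2)|c_j|²`. -/
noncomputable def A0 (n : ℕ) (c : ℕ → ℂ) : ℝ :=
  ∑ j ∈ Finset.range (n+1), ((j : ℝ) - (n : ℝ) / 2) * ‖c j‖ ^ 2

/-- `A₂(Ω) = ½ Σ_{j=1}^n f_j e^{iφ}[(1+cos θ)e^{iψ}conj(c_j)c_{j-1}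
           - (1-cos θ)e^{-iψ}c_j conj(c_{j-1})]`. -/
noncomputable def A2 (n : ℕ) (c : ℕ → ℂ) (φ θ ψ : ℝ) : ℂ :=
  (1 / 2 : ℂ) * ∑ j ∈ Finset.Icc 1 n, (fc n j : ℂ) * Complex.exp (Complex.I * (φ : ℂ)) *
    ((1 + (Real.cos θ : ℂ)) * Complex.exp (Complex.I * (ψ : ℂ)) *
        (starRingEnd ℂ) (c j) * c (j - 1) -
      (1 - (Real.cos θ : ℂ)) * Complex.exp (-(Complex.I * (ψ : ℂ))) *
        c j * (starRingEnd ℂ) (c (j - 1)))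


/-! ### Auxiliary lemmas -/

section Aux

lemma aux_sum_shift {n : ℕ} (j : Fin (n+1)) (g : Fin (n+1) → ℂ) :
    ∑ l : Fin (n+1), (if (j:ℕ) = (l:ℕ)+1 then g l else 0)
      = if h : 1 ≤ (j:ℕ) then g ⟨(j:ℕ)-1, by omega⟩ else 0 := by
  split_ifs with h
  · rw [Fintype.sum_eq_single (⟨(j:ℕ)-1, by omega⟩ : Fin (n+1))]
    · rw [if_pos]; simp; omega
    · intro l hl
      rw [if_neg]
      intro hc
      exact hl (by ext; simp; omega)
  · exact Finset.sum_eq_zero fun l _ => by rw [if_neg]; omega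

lemma aux_sum_shift' {n : ℕ} (j : Fin (n+1)) (g : Fin (n+1) → ℂ) :
    ∑ l : Fin (n+1), (if (l:ℕ) = (j:ℕ)+1 then g l else 0)
      = if h : (j:ℕ)+1 ≤ n then g ⟨(j:ℕ)+1, by omega⟩ else 0 := by
  split_ifs with h
  · rw [Fintype.sum_eq_single (⟨(j:ℕ)+1, by omega⟩ : Fin (n+1))]
    · rw [if_pos]; simp
    · intro l hl
      rw [if_neg]
      intro hc
      exact hl (by ext; simp; omega)
  · exact Finset.sum_eq_zero fun l _ => by
      rw [if_neg]; intro hc; have := l.isLt; omega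

lemma aux_Sm_apply {n : ℕ} (j k : Fin (n+1)) :
    Sm n j k = if (k : ℕ) = (j : ℕ) + 1
      then (Real.sqrt (((j : ℕ) + 1) * (n - (j : ℕ))) : ℂ) else 0 := by
  simp only [Sm, Matrix.conjTranspose_apply, Sp, Matrix.of_apply]
  split_ifs with h
  · simp [Complex.conj_ofReal]
  · simp

lemma aux_sq_entry {n k : ℕ} (hk : k < n) :
    ((Real.sqrt ((k + 1 : ℝ) * ((n : ℝ) - k)) : ℂ))
        * ((Real.sqrt ((k + 1 : ℝ) * ((n : ℝ) - k)) : ℂ))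
      = ((k : ℂ) + 1) * ((n : ℂ) - k) := by
  rw [← Complex.ofReal_mul, Real.mul_self_sqrt]
  · push_cast; ring
  · have : (k : ℝ) + 1 ≤ n := by exact_mod_cast hk
    nlinarith [Nat.cast_nonneg (α := ℝ) k]

lemma aux_S3_herm (n : ℕ) : (S3 n)ᴴ = S3 n := by
  have hf : (star fun j : Fin (n+1) => (j:ℂ) - (n:ℂ)/2)
      = fun j : Fin (n+1) => (j:ℂ) - (n:ℂ)/2 := by
    funext j
    show star ((j:ℂ) - (n:ℂ)/2) = (j:ℂ) - (n:ℂ)/2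
    rw [star_sub, star_div₀]
    simp [← Complex.ofReal_natCast, RCLike.star_def, Complex.conj_ofReal]
  rw [S3, Matrix.diagonal_conjTranspose, hf]

lemma aux_S2_herm (n : ℕ) : (S2 n)ᴴ = S2 n := by
  rw [S2, Matrix.conjTranspose_smul, Matrix.conjTranspose_sub]
  rw [show (Sp n)ᴴ = Sm n from rfl,
    show (Sm n)ᴴ = Sp n from Matrix.conjTranspose_conjTranspose _]
  have hs : star ((2 * Complex.I)⁻¹) = -(2 * Complex.I)⁻¹ := by
    rw [RCLike.star_def]
    rw [map_inv₀]
    rw [show (starRingEnd ℂ) (2 * Complex.I) = 2 * (starRingEnd ℂ) Complex.I by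
      rw [_root_.map_mul, Complex.conj_ofNat]]
    rw [Complex.conj_I]
    ring
  rw [hs, neg_smul, ← smul_neg, neg_sub]

lemma aux_R1 (n : ℕ) : S3 n * Sp n - Sp n * S3 n = Sp n := by
  ext j k
  simp only [Matrix.sub_apply, S3, Matrix.diagonal_mul, Matrix.mul_diagonal, Sp, Matrix.of_apply]
  split_ifs with h
  · have hj : ((j:ℕ) : ℂ) = ((k:ℕ) : ℂ) + 1 := by exact_mod_cast congrArg (Nat.cast : ℕ → ℂ) h
    rw [hj]; ring
  · ring

lemma aux_R2 (n : ℕ) : S3 n * Sm n - Sm n * S3 n = -Sm n := by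
  have := congrArg Matrix.conjTranspose (aux_R1 n)
  simp only [Matrix.conjTranspose_sub, Matrix.conjTranspose_mul, aux_S3_herm] at this
  rw [show (Sp n)ᴴ = Sm n from rfl] at this
  linear_combination (norm := abel) -this

lemma aux_R3 (n : ℕ) : Sp n * Sm n - Sm n * Sp n = (2 : ℂ) • S3 n := by
  ext j k
  simp only [Matrix.sub_apply, Matrix.mul_apply, Matrix.smul_apply, S3, Sp, Matrix.of_apply,
    aux_Sm_apply, ite_mul, mul_ite, zero_mul, mul_zero]
  rw [aux_sum_shift k, aux_sum_shift' k]
  rw [Matrix.diagonal_apply, smul_eq_mul]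
  rcases eq_or_ne j k with rfl | hjk
  · rw [if_pos rfl]
    by_cases h1 : 1 ≤ (j:ℕ) <;> by_cases h2 : (j:ℕ)+1 ≤ n
    · rw [dif_pos h1, dif_pos h2, if_pos (by simp; omega), if_pos (by simp)]
      rw [aux_sq_entry (show ((⟨(j:ℕ)-1, by omega⟩ : Fin (n+1)):ℕ) < n by simp; omega),
          aux_sq_entry (show (j:ℕ) < n by omega)]
      have hc : (((j:ℕ)-1 : ℕ) : ℂ) = ((j:ℕ) : ℂ) - 1 := by
        push_cast [Nat.cast_sub h1]; ring
      simp only [Fin.val_mk] at *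
      rw [hc]; ring
    · rw [dif_pos h1, dif_neg h2, if_pos (by simp; omega)]
      rw [aux_sq_entry (show ((⟨(j:ℕ)-1, by omega⟩ : Fin (n+1)):ℕ) < n by simp; omega)]
      have hj : (j:ℕ) = n := by omega
      have hc : (((j:ℕ)-1 : ℕ) : ℂ) = ((j:ℕ) : ℂ) - 1 := by
        push_cast [Nat.cast_sub h1]; ring
      simp only [Fin.val_mk] at *
      rw [hc, hj]; ring
    · rw [dif_neg h1, dif_pos h2, if_pos (by simp)]
      rw [aux_sq_entry (show (j:ℕ) < n by omega)]
      have hj : (j:ℕ) = 0 := by omega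
      rw [hj]; push_cast; ring
    · rw [dif_neg h1, dif_neg h2]
      have hj : (j:ℕ) = 0 := by omega
      have hn : n = 0 := by omega
      rw [hj, hn]; push_cast; ring
  · rw [if_neg hjk, mul_zero]
    have e1 : (if h : 1 ≤ (k:ℕ) then
        (if (j:ℕ) = ((⟨(k:ℕ)-1, by omega⟩ : Fin (n+1)):ℕ)+1 then
          ((Real.sqrt ((((⟨(k:ℕ)-1, by omega⟩ : Fin (n+1)):ℕ) + 1)
              * (n - ((⟨(k:ℕ)-1, by omega⟩ : Fin (n+1)):ℕ))) : ℝ) : ℂ) *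
            ((Real.sqrt ((((⟨(k:ℕ)-1, by omega⟩ : Fin (n+1)):ℕ) + 1)
              * (n - ((⟨(k:ℕ)-1, by omega⟩ : Fin (n+1)):ℕ))) : ℝ) : ℂ) else 0)
        else 0) = 0 := by
      split_ifs with h h'
      · exfalso; apply hjk; ext; simp at h'; omega
      · rfl
      · rfl
    rw [e1, zero_sub, neg_eq_zero]
    split_ifs with h h'
    · exfalso; apply hjk; ext; simp at h'; omega
    · rfl
    · rfl

section ExpMul

attribute [local instance] Matrix.linftyOpNormedRing Matrix.linftyOpNormedAlgebra

lemma aux_exp_mul_comm {N : ℕ} (A B : Matrix (Fin N) (Fin N) ℂ) (μ : ℂ)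
    (h : A * B = B * A + μ • B) :
    NormedSpace.exp A * B = Complex.exp μ • (B * NormedSpace.exp A) := by
  have hAB : A * B = B * (A + μ • (1 : Matrix (Fin N) (Fin N) ℂ)) := by
    rw [mul_add, mul_smul_comm, mul_one, h]
  have hpow : ∀ m : ℕ, A ^ m * B = B * (A + μ • (1 : Matrix (Fin N) (Fin N) ℂ)) ^ m := by
    intro m
    induction m with
    | zero => simp
    | succ k ih =>
      rw [pow_succ, pow_succ, mul_assoc, hAB, ← mul_assoc, ih, mul_assoc]
  have hsumA := @NormedSpace.expSeries_summable' ℂ (Matrix (Fin N) (Fin N) ℂ) _ _ _ _ _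
    (FiniteDimensional.complete ℂ _) A
  have hsumC := @NormedSpace.expSeries_summable' ℂ (Matrix (Fin N) (Fin N) ℂ) _ _ _ _ _
    (FiniteDimensional.complete ℂ _)
    (A + μ • (1 : Matrix (Fin N) (Fin N) ℂ))
  have key : NormedSpace.exp A * B
      = B * NormedSpace.exp (A + μ • (1 : Matrix (Fin N) (Fin N) ℂ)) := by
    simp only [NormedSpace.exp_eq_tsum ℂ]
    erw [← hsumA.tsum_mul_right B, ← hsumC.tsum_mul_left B]
    congr 1
    funext m
    rw [smul_mul_assoc, hpow, mul_smul_comm]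
  rw [key]
  have hcomm : Commute (μ • (1 : Matrix (Fin N) (Fin N) ℂ)) A := by
    unfold Commute SemiconjBy
    rw [smul_mul_assoc, one_mul, mul_smul_comm, mul_one]
  rw [add_comm, Matrix.exp_add_of_commute _ _ hcomm]
  have hone : NormedSpace.exp (μ • (1 : Matrix (Fin N) (Fin N) ℂ))
      = Complex.exp μ • (1 : Matrix (Fin N) (Fin N) ℂ) := by
    rw [← Algebra.algebraMap_eq_smul_one]
    erw [← NormedSpace.algebraMap_exp_comm]
    rw [Complex.exp_eq_exp_ℂ, Algebra.algebraMap_eq_smul_one]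
  rw [hone, smul_mul_assoc, one_mul, mul_smul_comm]

lemma aux_exp_mul_inv {N : ℕ} (A : Matrix (Fin N) (Fin N) ℂ) :
    NormedSpace.exp A * NormedSpace.exp (-A) = 1 := by
  rw [← Matrix.exp_add_of_commute _ _ (Commute.neg_right (Commute.refl A)), add_neg_cancel,
    NormedSpace.exp_zero]

lemma aux_exp_conj {N : ℕ} (A B : Matrix (Fin N) (Fin N) ℂ) (μ : ℂ)
    (h : A * B = B * A + μ • B) :
    NormedSpace.exp A * B * NormedSpace.exp (-A) = Complex.exp μ • B := by
  rw [aux_exp_mul_comm A B μ h, smul_mul_assoc, mul_assoc, aux_exp_mul_inv, mul_one]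

end ExpMul

lemma aux_smul_rel {N : ℕ} (A B : Matrix (Fin N) (Fin N) ℂ) (a μ : ℂ)
    (h : A * B = B * A + μ • B) :
    (a • A) * B = B * (a • A) + (a * μ) • B := by
  rw [Matrix.smul_mul, h, Matrix.mul_smul, smul_add, smul_smul]

lemma aux_assoc5 {N : ℕ} (G E X F H Y : Matrix (Fin N) (Fin N) ℂ) (hX : E * X * F = Y) :
    G * E * X * (F * H) = G * Y * H := by
  rw [← hX]; noncomm_ring

/-- The key conjugation computation. -/
lemma aux_key (n : ℕ) (φ θ ψ : ℝ) :
    (Rot n φ θ ψ)ᴴ * Sp n * Rot n φ θ ψ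
      = Complex.exp (Complex.I * (φ:ℂ)) •
          (((Real.sin θ : ℂ)) • S3 n
            + (((1 + (Real.cos θ:ℂ))/2) * Complex.exp (Complex.I * (ψ:ℂ))) • Sp n
            - (((1 - (Real.cos θ:ℂ))/2) * Complex.exp (-(Complex.I * (ψ:ℂ)))) • Sm n) := by
  classical
  set P := Sp n with hP
  set M := Sm n with hM
  set T := S3 n with hT
  set W := S2 n with hW
  have hrel1 : T * P = P * T + (1:ℂ) • P := by
    rw [one_smul]
    linear_combination (norm := abel) (aux_R1 n)
  have hrel2 : M * T = T * M + M := by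
    linear_combination (norm := abel) -(aux_R2 n)
  have hrel2' : T * M = M * T + (-1:ℂ) • M := by
    rw [neg_one_smul]
    linear_combination (norm := abel) (aux_R2 n)
  have hrel3 : P * M = M * P + (2:ℂ) • T := by
    linear_combination (norm := abel) (aux_R3 n)
  set U := (2:ℂ)⁻¹ • (P + M) - Complex.I • T with hU
  set V := (2:ℂ)⁻¹ • (P + M) + Complex.I • T with hV
  have hWdef : W = (2 * Complex.I)⁻¹ • (P - M) := rfl
  have hbU : W * U = U * W + (1:ℂ) • U := by
    rw [hWdef, hU]
    simp only [Matrix.smul_mul, Matrix.mul_smul, Matrix.sub_mul, Matrix.mul_sub,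
      Matrix.add_mul, Matrix.mul_add, smul_sub, smul_add, smul_smul]
    simp only [hrel1]
    simp only [hrel2]
    simp only [hrel3]
    simp only [Matrix.mul_smul, smul_add, smul_smul, smul_sub]
    match_scalars <;> norm_num [Complex.ext_iff] <;> (try ring)
  have hbV : W * V = V * W + (-1:ℂ) • V := by
    rw [hWdef, hV]
    simp only [Matrix.smul_mul, Matrix.mul_smul, Matrix.sub_mul, Matrix.mul_sub,
      Matrix.add_mul, Matrix.mul_add, smul_sub, smul_add, smul_smul]
    simp only [hrel1]
    simp only [hrel2]
    simp only [hrel3]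
    simp only [Matrix.mul_smul, smul_add, smul_smul, smul_sub]
    match_scalars <;> norm_num [Complex.ext_iff] <;> (try ring)
  have hbW : W * W = W * W + (0:ℂ) • W := by rw [zero_smul, add_zero]
  have hbT : T * T = T * T + (0:ℂ) • T := by rw [zero_smul, add_zero]
  have hdec : P = (2:ℂ)⁻¹ • U + (2:ℂ)⁻¹ • V + Complex.I • W := by
    rw [hU, hV, hWdef]
    match_scalars <;> norm_num [Complex.ext_iff] <;> (try ring)
  -- exponential factors
  set E1 := NormedSpace.exp ((Complex.I * (ψ:ℂ)) • T) with hE1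
  set E2 := NormedSpace.exp ((Complex.I * (θ:ℂ)) • W) with hE2
  set E3 := NormedSpace.exp ((Complex.I * (φ:ℂ)) • T) with hE3
  set F1 := NormedSpace.exp (-((Complex.I * (ψ:ℂ)) • T)) with hF1
  set F2 := NormedSpace.exp (-((Complex.I * (θ:ℂ)) • W)) with hF2
  set F3 := NormedSpace.exp (-((Complex.I * (φ:ℂ)) • T)) with hF3
  have hRot : Rot n φ θ ψ = F3 * (F2 * F1) := by
    rw [Rot, hF1, hF2, hF3, mul_assoc]
    rw [show (-Complex.I * (φ:ℂ)) • T = -((Complex.I * (φ:ℂ)) • T) by rw [neg_mul, neg_smul],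
        show (-Complex.I * (θ:ℂ)) • W = -((Complex.I * (θ:ℂ)) • W) by rw [neg_mul, neg_smul],
        show (-Complex.I * (ψ:ℂ)) • T = -((Complex.I * (ψ:ℂ)) • T) by rw [neg_mul, neg_smul]]
  have hexpH : ∀ (r : ℝ) (A : Matrix (Fin (n+1)) (Fin (n+1)) ℂ), Aᴴ = A →
      (NormedSpace.exp (-((Complex.I * (r:ℂ)) • A)))ᴴ
        = NormedSpace.exp ((Complex.I * (r:ℂ)) • A) := by
    intro r A hA
    rw [← Matrix.exp_conjTranspose, Matrix.conjTranspose_neg, Matrix.conjTranspose_smul, hA,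
      ← neg_smul]
    congr 2
    rw [RCLike.star_def, _root_.map_mul, Complex.conj_I, Complex.conj_ofReal]
    ring
  have hRotH : (Rot n φ θ ψ)ᴴ = E1 * E2 * E3 := by
    rw [hRot, Matrix.conjTranspose_mul, Matrix.conjTranspose_mul,
      hexpH φ T (aux_S3_herm n), hexpH θ W (aux_S2_herm n), hexpH ψ T (aux_S3_herm n),
      ← hE1, ← hE2, ← hE3, mul_assoc]
  -- individual conjugations
  have hconjφ : E3 * P * F3 = Complex.exp (Complex.I * (φ:ℂ)) • P := by
    have := aux_exp_conj ((Complex.I * (φ:ℂ)) • T) P (Complex.I * (φ:ℂ) * 1)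
      (aux_smul_rel T P _ _ hrel1)
    rwa [mul_one] at this
  have hconjU : E2 * U * F2 = Complex.exp (Complex.I * (θ:ℂ)) • U := by
    have := aux_exp_conj ((Complex.I * (θ:ℂ)) • W) U (Complex.I * (θ:ℂ) * 1)
      (aux_smul_rel W U _ _ hbU)
    rwa [mul_one] at this
  have hconjV : E2 * V * F2 = Complex.exp (-(Complex.I * (θ:ℂ))) • V := by
    have := aux_exp_conj ((Complex.I * (θ:ℂ)) • W) V (Complex.I * (θ:ℂ) * (-1))
      (aux_smul_rel W V _ _ hbV)
    rwa [show Complex.I * (θ:ℂ) * (-1) = -(Complex.I * (θ:ℂ)) by ring] at this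
  have hconjW : E2 * W * F2 = W := by
    have := aux_exp_conj ((Complex.I * (θ:ℂ)) • W) W (Complex.I * (θ:ℂ) * 0)
      (aux_smul_rel W W _ _ hbW)
    rwa [mul_zero, Complex.exp_zero, one_smul] at this
  have hconjT1 : E1 * T * F1 = T := by
    have := aux_exp_conj ((Complex.I * (ψ:ℂ)) • T) T (Complex.I * (ψ:ℂ) * 0)
      (aux_smul_rel T T _ _ hbT)
    rwa [mul_zero, Complex.exp_zero, one_smul] at this
  have hconjP1 : E1 * P * F1 = Complex.exp (Complex.I * (ψ:ℂ)) • P := by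
    have := aux_exp_conj ((Complex.I * (ψ:ℂ)) • T) P (Complex.I * (ψ:ℂ) * 1)
      (aux_smul_rel T P _ _ hrel1)
    rwa [mul_one] at this
  have hconjM1 : E1 * M * F1 = Complex.exp (-(Complex.I * (ψ:ℂ))) • M := by
    have := aux_exp_conj ((Complex.I * (ψ:ℂ)) • T) M (Complex.I * (ψ:ℂ) * (-1))
      (aux_smul_rel T M _ _ hrel2')
    rwa [show Complex.I * (ψ:ℂ) * (-1) = -(Complex.I * (ψ:ℂ)) by ring] at this
  -- middle conjugation
  have hmid : E2 * P * F2
      = ((Real.sin θ : ℂ)) • T + ((1 + (Real.cos θ:ℂ))/2) • P - ((1 - (Real.cos θ:ℂ))/2) • M := by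
    have hlin : E2 * P * F2
        = (2:ℂ)⁻¹ • (E2 * U * F2) + (2:ℂ)⁻¹ • (E2 * V * F2) + Complex.I • (E2 * W * F2) := by
      conv_lhs => rw [hdec]
      simp only [Matrix.mul_add, Matrix.add_mul, Matrix.mul_smul, Matrix.smul_mul]
    rw [hlin, hconjU, hconjV, hconjW]
    have hcos : Complex.exp (Complex.I * (θ:ℂ))
        = (Real.cos θ : ℂ) + (Real.sin θ : ℂ) * Complex.I := by
      rw [mul_comm, Complex.exp_mul_I, Complex.ofReal_cos, Complex.ofReal_sin]
    have hcos' : Complex.exp (-(Complex.I * (θ:ℂ)))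
        = (Real.cos θ : ℂ) - (Real.sin θ : ℂ) * Complex.I := by
      rw [show -(Complex.I * (θ:ℂ)) = ((-θ : ℝ) : ℂ) * Complex.I by push_cast; ring,
        Complex.exp_mul_I, ← Complex.ofReal_cos, ← Complex.ofReal_sin]
      push_cast [Real.cos_neg, Real.sin_neg]
      ring
    rw [hcos, hcos', hU, hV, hWdef]
    match_scalars <;> norm_num [Complex.ext_iff] <;> (try ring)
  -- full assembly
  calc (Rot n φ θ ψ)ᴴ * P * Rot n φ θ ψ
      = E1 * E2 * E3 * P * (F3 * (F2 * F1)) := by rw [hRotH, hRot]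
    _ = E1 * E2 * (Complex.exp (Complex.I * (φ:ℂ)) • P) * (F2 * F1) :=
        aux_assoc5 _ _ _ _ _ _ hconjφ
    _ = Complex.exp (Complex.I * (φ:ℂ)) • (E1 * E2 * P * (F2 * F1)) := by
        rw [Matrix.mul_smul, Matrix.smul_mul]
    _ = Complex.exp (Complex.I * (φ:ℂ)) • (E1 * (E2 * P * F2) * F1) := by
        rw [aux_assoc5 E1 E2 P F2 F1 _ rfl]
    _ = Complex.exp (Complex.I * (φ:ℂ)) •
          (((Real.sin θ : ℂ)) • (E1 * T * F1)
            + ((1 + (Real.cos θ:ℂ))/2) • (E1 * P * F1)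
            - ((1 - (Real.cos θ:ℂ))/2) • (E1 * M * F1)) := by
        rw [hmid]
        simp only [Matrix.mul_add, Matrix.add_mul, Matrix.mul_sub, Matrix.sub_mul,
          Matrix.mul_smul, Matrix.smul_mul]
    _ = Complex.exp (Complex.I * (φ:ℂ)) •
          (((Real.sin θ : ℂ)) • T
            + (((1 + (Real.cos θ:ℂ))/2) * Complex.exp (Complex.I * (ψ:ℂ))) • P
            - (((1 - (Real.cos θ:ℂ))/2) * Complex.exp (-(Complex.I * (ψ:ℂ)))) • M) := by
        rw [hconjT1, hconjP1, hconjM1]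
        rw [smul_smul, smul_smul]

lemma aux_quad {N : ℕ} (R X : Matrix (Fin N) (Fin N) ℂ) (v : Fin N → ℂ) :
    star (R *ᵥ v) ⬝ᵥ (X *ᵥ (R *ᵥ v)) = star v ⬝ᵥ ((Rᴴ * X * R) *ᵥ v) := by
  rw [Matrix.star_mulVec, Matrix.mulVec_mulVec, ← Matrix.dotProduct_mulVec,
    Matrix.mulVec_mulVec, ← mul_assoc]

lemma aux_adj {N : ℕ} (A : Matrix (Fin N) (Fin N) ℂ) (w : Fin N → ℂ) :
    star w ⬝ᵥ (Aᴴ *ᵥ w) = (starRingEnd ℂ) (star w ⬝ᵥ (A *ᵥ w)) := by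
  have h1 : star w ⬝ᵥ (Aᴴ *ᵥ w) = star (star (Aᴴ *ᵥ w) ⬝ᵥ w) := Matrix.star_dotProduct _ _
  rw [h1, Matrix.star_mulVec, Matrix.conjTranspose_conjTranspose,
    ← Matrix.dotProduct_mulVec]
  rfl

lemma aux_L1 (n : ℕ) (c : ℕ → ℂ) :
    star (fun j : Fin (n+1) => c (j : ℕ)) ⬝ᵥ (S3 n *ᵥ fun j : Fin (n+1) => c (j : ℕ))
      = ((A0 n c : ℝ) : ℂ) := by
  have habs : ∀ z : ℂ, ((‖z‖ : ℝ) : ℂ) ^ 2 = (starRingEnd ℂ) z * z := by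
    intro z
    rw [← Complex.ofReal_pow, Complex.sq_norm, Complex.normSq_eq_conj_mul_self]
  simp only [dotProduct, S3, Matrix.mulVec_diagonal, Pi.star_apply]
  rw [A0]
  push_cast
  rw [← Fin.sum_univ_eq_sum_range
    (fun j => (((j:ℕ) : ℂ) - (n:ℂ)/2) * ((‖c j‖ : ℝ) : ℂ)^2) (n+1)]
  refine Finset.sum_congr rfl fun j _ => ?_
  rw [habs]
  simp only [RCLike.star_def]
  ring

lemma aux_L2 (n : ℕ) (c : ℕ → ℂ) :
    star (fun j : Fin (n+1) => c (j : ℕ)) ⬝ᵥ (Sp n *ᵥ fun j : Fin (n+1) => c (j : ℕ))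
      = ∑ j ∈ Finset.Icc 1 n, (fc n j : ℂ) * ((starRingEnd ℂ) (c j) * c (j-1)) := by
  have step1 : ∀ j : Fin (n+1),
      star (c (j:ℕ)) * (Sp n *ᵥ fun l : Fin (n+1) => c (l : ℕ)) j
        = (fun m : ℕ => if 1 ≤ m then (fc n m : ℂ) * ((starRingEnd ℂ) (c m) * c (m-1)) else 0)
            (j : ℕ) := by
    intro j
    show star (c (j:ℕ)) * ∑ l : Fin (n+1), Sp n j l * c (l:ℕ) = _
    rw [Finset.mul_sum]
    simp only [Sp, Matrix.of_apply, ite_mul, zero_mul, mul_ite, mul_zero]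
    rw [aux_sum_shift j (fun l => star (c (j:ℕ))
      * ((Real.sqrt (((l : ℕ) + 1) * (n - (l : ℕ))) : ℂ) * c (l:ℕ)))]
    split_ifs with h
    · have hjn : (j:ℕ) ≤ n := by omega
      have hfc : Real.sqrt (((((j:ℕ)-1 : ℕ) : ℝ) + 1) * ((n:ℝ) - (((j:ℕ)-1 : ℕ) : ℝ)))
          = fc n (j:ℕ) := by
        rw [fc]
        congr 1
        push_cast [Nat.cast_sub h, Nat.cast_sub hjn]
        ring
      simp only [Fin.val_mk]
      rw [hfc]
      simp only [RCLike.star_def]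
      ring
    · rfl
  calc star (fun j : Fin (n+1) => c (j : ℕ)) ⬝ᵥ (Sp n *ᵥ fun j : Fin (n+1) => c (j : ℕ))
      = ∑ j : Fin (n+1),
          (fun m : ℕ => if 1 ≤ m then (fc n m : ℂ)
            * ((starRingEnd ℂ) (c m) * c (m-1)) else 0) (j : ℕ) := by
        refine Finset.sum_congr rfl fun j _ => step1 j
    _ = ∑ j ∈ Finset.range (n+1),
          (if 1 ≤ j then (fc n j : ℂ) * ((starRingEnd ℂ) (c j) * c (j-1)) else 0) := by
        exact Fin.sum_univ_eq_sum_range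
          (fun m : ℕ => if 1 ≤ m then (fc n m : ℂ)
            * ((starRingEnd ℂ) (c m) * c (m-1)) else 0) (n+1)
    _ = ∑ j ∈ Finset.Icc 1 n, (fc n j : ℂ) * ((starRingEnd ℂ) (c j) * c (j-1)) := by
        rw [Finset.range_eq_Ico, Finset.sum_eq_sum_Ico_succ_bot (Nat.succ_pos n)]
        rw [if_neg (by omega), zero_add, Nat.succ_eq_add_one, Finset.Ico_add_one_right_eq_Icc]
        exact Finset.sum_congr rfl fun j hj => by
          rw [if_pos (Finset.mem_Icc.mp hj).1]

lemma aux_L3 (n : ℕ) (c : ℕ → ℂ) :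
    star (fun j : Fin (n+1) => c (j : ℕ)) ⬝ᵥ (Sm n *ᵥ fun j : Fin (n+1) => c (j : ℕ))
      = ∑ j ∈ Finset.Icc 1 n, (fc n j : ℂ) * (c j * (starRingEnd ℂ) (c (j-1))) := by
  rw [show Sm n = (Sp n)ᴴ from rfl, aux_adj, aux_L2, map_sum]
  refine Finset.sum_congr rfl fun j _ => ?_
  rw [_root_.map_mul, _root_.map_mul, Complex.conj_conj, Complex.conj_ofReal]

end Aux


/-- Expectation values of the ladder operators in a general coherent state:
`⟨R(Ω)Ψ₀, S₊ R(Ω)Ψ₀⟩ = A₀ sin θ e^{iφ} + A₂(Ω)` and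
`⟨R(Ω)Ψ₀, S₋ R(Ω)Ψ₀⟩ = conj ⟨R(Ω)Ψ₀, S₊ R(Ω)Ψ₀⟩`. -/
theorem expectation_ladder (n : ℕ) (c : ℕ → ℂ)
    (hc : ∑ j ∈ Finset.range (n+1), ‖c j‖ ^ 2 = 1)
    (φ θ ψ : ℝ) :
    star (Rot n φ θ ψ *ᵥ fun j : Fin (n+1) => c (j : ℕ)) ⬝ᵥ
        (Sp n *ᵥ (Rot n φ θ ψ *ᵥ fun j : Fin (n+1) => c (j : ℕ))) =
      ((A0 n c : ℝ) : ℂ) * ((Real.sin θ : ℝ) : ℂ) * Complex.exp (Complex.I * (φ : ℂ)) +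
        A2 n c φ θ ψ ∧
    star (Rot n φ θ ψ *ᵥ fun j : Fin (n+1) => c (j : ℕ)) ⬝ᵥ
        (Sm n *ᵥ (Rot n φ θ ψ *ᵥ fun j : Fin (n+1) => c (j : ℕ))) =
      (starRingEnd ℂ)
        (star (Rot n φ θ ψ *ᵥ fun j : Fin (n+1) => c (j : ℕ)) ⬝ᵥ
          (Sp n *ᵥ (Rot n φ θ ψ *ᵥ fun j : Fin (n+1) => c (j : ℕ)))) := by
  constructor
  · rw [aux_quad, aux_key]
    simp only [Matrix.smul_mulVec, Matrix.add_mulVec, Matrix.sub_mulVec,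
      dotProduct_smul, dotProduct_add, dotProduct_sub, smul_eq_mul]
    rw [aux_L1, aux_L2, aux_L3]
    have hA2 : A2 n c φ θ ψ
        = Complex.exp (Complex.I * (φ:ℂ)) *
            ((((1 + (Real.cos θ:ℂ))/2) * Complex.exp (Complex.I * (ψ:ℂ)))
                * (∑ j ∈ Finset.Icc 1 n, (fc n j : ℂ) * ((starRingEnd ℂ) (c j) * c (j-1)))
              - (((1 - (Real.cos θ:ℂ))/2) * Complex.exp (-(Complex.I * (ψ:ℂ))))
                * (∑ j ∈ Finset.Icc 1 n, (fc n j : ℂ) * (c j * (starRingEnd ℂ) (c (j-1))))) := by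
      rw [A2]
      simp only [mul_sub, Finset.mul_sum, ← Finset.sum_sub_distrib]
      refine Finset.sum_congr rfl fun j _ => ?_
      ring
    rw [hA2]
    ring
  · rw [show Sm n = (Sp n)ᴴ from rfl]
    exact aux_adj _ _
end
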